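/- Let η ∈ {i, j, k} ⊆ ℍ and let A₁ ∈ ℍ^{p×a}, A₂ ∈ ℍ^{p×a₂}, A₃ ∈ ℍ^{p×a₃}, A₄ ∈ ℍ^{p×a₄}, B ∈ ℍ^{p×p} be quaternion matrices with B = B^{η*}. With the derived matrices of the context (A₁₁ = R_{A₁}A₂, A₂₂ = R_{A₁}A₃, A₃₃ = R_{A₁}A₄, M₁ = R_{A₁₁}A₂₂, T₁ = R_{A₁}B(R_{A₁})^{η*}, C = R_{M₁}R_{A₁₁}, C₁ = CA₃₃, C₂ = R_{A₁₁}A₃₃, C₃ = R_{A₂₂}A₃₃, C₄ = A₃₃, E₁ = CT₁, E₂ = R_{A₁₁}T₁(R_{A₂₂})^{η*}, E₃ = R_{A₂₂}T₁(R_{A₁₁})^{η*}, E₄ = T₁C^{η*}, C₁₁ = (L_{C₂}, L_{C₄}), C₂₂ = L_{C₁}, C₃₃ = L_{C₃}, E₁₁ = R_{C₁₁}C₂₂, E₂₂ = R_{C₁₁}C₃₃, F₁ = C₁⁺E₁(C₄^{η*})⁺ + L_{C₁}C₂⁺E₂(C₃^{η*})⁺, F₂ = C₃⁺E₃(C₂^{η*})⁺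 + L_{C₃}C₄⁺E₄(C₁^{η*})⁺, F = F₂ − F₁, E = R_{C₁₁}F(R_{C₁₁})^{η*}), the equation A₁X₁ + (A₁X₁)^{η*} + A₂Y₁A₂^{η*} + A₃Y₂A₃^{η*} + A₄Y₃A₄^{η*} = B has a solution (X₁, Y₁, Y₂, Y₃) with Y₁, Y₂, Y₃ η-Hermitian if and only if R_{Cᵢ}Eᵢ = 0 for all i = 1,2,3,4 and R_{E₂₂}E(R_{E₂₂})^{η*} = 0. -/

import Mathlib

set_option linter.unusedSectionVars false

open Matrix

abbrev Hq : Type := Quaternion ℝ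

/-- The quaternion `i`. -/
def qi : Hq := ⟨0, 1, 0, 0⟩
/-- The quaternion `j`. -/
def qj : Hq := ⟨0, 0, 1, 0⟩
/-- The quaternion `k`. -/
def qk : Hq := ⟨0, 0, 0, 1⟩

/-- The η-conjugate transpose `A^{η*} = -η Aᴴ η`:
its `(s, t)` entry is `-η * conj (A t s) * η`. -/
noncomputable def etaCT {m n : Type*} (η : Hq) (A : Matrix m n Hq) : Matrix n m Hq :=
  Matrix.of fun s t => -η * star (A t s) * η

/-- `Ap` is a Moore–Penrose inverse of `A`. -/
def IsMPInv {m n : Type*} [Fintype m] [Fintype n] (A : Matrix m n Hq) (Ap : Matrix n m Hq) :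
    Prop :=
  A * Ap * A = A ∧ Ap * A * Ap = Ap ∧ (A * Ap)ᴴ = A * Ap ∧ (Ap * A)ᴴ = Ap * A

lemma eta_mul_self {η : Hq} (hη : η = qi ∨ η = qj ∨ η = qk) : η * η = -1 := by
  rcases hη with h | h | h <;> subst h <;>
    ext <;> simp [Quaternion.re_mul, Quaternion.imI_mul, Quaternion.imJ_mul,
      Quaternion.imK_mul, Quaternion.re_one, Quaternion.imI_one, Quaternion.imJ_one,
      Quaternion.imK_one] <;> simp [qi, qj, qk]

lemma eta_star {η : Hq} (hη : η = qi ∨ η = qj ∨ η = qk) : star η = -η := by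
  rcases hη with h | h | h <;> subst h <;> ext <;> simp <;> simp [qi, qj, qk]

section etaCTAPI

variable {η : Hq}

lemma etaCT_add {m n : Type*} (A B : Matrix m n Hq) :
    etaCT η (A + B) = etaCT η A + etaCT η B := by
  refine Matrix.ext fun s t => ?_
  simp only [etaCT, Matrix.of_apply, Matrix.add_apply, star_add]
  noncomm_ring

lemma etaCT_sub {m n : Type*} (A B : Matrix m n Hq) :
    etaCT η (A - B) = etaCT η A - etaCT η B := by
  refine Matrix.ext fun s t => ?_
  simp only [etaCT, Matrix.of_apply, Matrix.sub_apply, star_sub]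
  noncomm_ring

lemma etaCT_neg {m n : Type*} (A : Matrix m n Hq) :
    etaCT η (-A) = -(etaCT η A) := by
  refine Matrix.ext fun s t => ?_
  simp only [etaCT, Matrix.of_apply, Matrix.neg_apply, star_neg]
  noncomm_ring

lemma etaCT_zero {m n : Type*} : etaCT η (0 : Matrix m n Hq) = 0 := by
  refine Matrix.ext fun s t => ?_
  simp only [etaCT, Matrix.of_apply, Matrix.zero_apply, star_zero, mul_zero, zero_mul]

lemma etaCT_smul {m n : Type*} (c : ℝ) (A : Matrix m n Hq) :
    etaCT η ((c : Hq) • A) = (c : Hq) • etaCT η A := by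
  refine Matrix.ext fun s t => ?_
  simp only [etaCT, Matrix.of_apply, Matrix.smul_apply, smul_eq_mul, StarMul.star_mul,
    Quaternion.star_coe]
  calc -η * (star (A t s) * (c:Hq)) * η
      = -η * star (A t s) * ((c:Hq) * η) := by noncomm_ring
    _ = -η * star (A t s) * (η * (c:Hq)) := by rw [Quaternion.coe_commutes]
    _ = (-η * star (A t s) * η) * (c:Hq) := by noncomm_ring
    _ = (c:Hq) * (-η * star (A t s) * η) := by rw [← Quaternion.coe_commutes]

variable (h2 : η * η = -1)

include h2 in
lemma etaCT_one {n : Type*} [DecidableEq n] : etaCT η (1 : Matrix n n Hq) = 1 := by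
  refine Matrix.ext fun s t => ?_
  by_cases h : s = t
  · subst h
    simp only [etaCT, Matrix.of_apply, Matrix.one_apply_eq, star_one, mul_one, neg_mul, h2,
      neg_neg]
  · simp [etaCT, Matrix.one_apply, h, Ne.symm h]

include h2 in
lemma etaCT_mul {m n k : Type*} [Fintype n] (A : Matrix m n Hq) (B : Matrix n k Hq) :
    etaCT η (A * B) = etaCT η B * etaCT η A := by
  refine Matrix.ext fun s t => ?_
  simp only [etaCT, Matrix.of_apply, Matrix.mul_apply, star_sum, StarMul.star_mul,
    Finset.mul_sum, Finset.sum_mul]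
  refine Finset.sum_congr rfl fun u _ => ?_
  have h1 : η * -η = 1 := by rw [mul_neg, h2]; simp
  calc -η * (star (B u s) * star (A t u)) * η
      = -η * star (B u s) * ((η * -η) * (star (A t u) * η)) := by rw [h1]; noncomm_ring
    _ = -η * star (B u s) * η * (-η * star (A t u) * η) := by noncomm_ring

variable (hs : star η = -η)

include h2 hs in
lemma etaCT_etaCT {m n : Type*} (A : Matrix m n Hq) : etaCT η (etaCT η A) = A := by
  have key : ∀ x : Hq, -η * star (-η * star x * η) * η = x := by
    intro x
    rw [StarMul.star_mul, StarMul.star_mul, star_star, star_neg, hs, neg_neg]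
    calc -η * (-η * (x * η)) * η = (η * η) * x * (η * η) := by noncomm_ring
      _ = x := by rw [h2]; simp
  refine Matrix.ext fun s t => ?_
  exact key (A s t)

end etaCTAPI

section MPAPI

variable {m n : Type*} [Fintype m] [Fintype n] [DecidableEq m] [DecidableEq n]
  {A : Matrix m n Hq} {Ap : Matrix n m Hq}

lemma IsMPInv.R_mul (h : IsMPInv A Ap) : (1 - A * Ap) * A = 0 := by
  rw [Matrix.sub_mul, Matrix.one_mul, h.1, sub_self]

lemma IsMPInv.mul_L (h : IsMPInv A Ap) : A * (1 - Ap * A) = 0 := by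
  rw [Matrix.mul_sub, Matrix.mul_one, ← Matrix.mul_assoc, h.1, sub_self]

lemma IsMPInv.R_herm (h : IsMPInv A Ap) : (1 - A * Ap)ᴴ = 1 - A * Ap := by
  rw [conjTranspose_sub, conjTranspose_one, h.2.2.1]

lemma IsMPInv.P_herm (h : IsMPInv A Ap) : (Ap * A)ᴴ = Ap * A := h.2.2.2

lemma IsMPInv.R_idem (h : IsMPInv A Ap) : (1 - A * Ap) * (1 - A * Ap) = 1 - A * Ap := by
  have hP : (A * Ap) * (A * Ap) = A * Ap := by
    rw [Matrix.mul_assoc, ← Matrix.mul_assoc Ap A Ap, h.2.1]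
  rw [mul_sub, mul_one, sub_mul, one_mul, hP]
  abel

lemma IsMPInv.P_idem (h : IsMPInv A Ap) : (Ap * A) * (Ap * A) = Ap * A := by
  rw [Matrix.mul_assoc, ← Matrix.mul_assoc A Ap A, h.1]

/-- If `E` is Hermitian and `E * A = A` then `Ap * E = Ap`. -/
lemma IsMPInv.absorb_left (h : IsMPInv A Ap) (E : Matrix m m Hq) (hE : Eᴴ = E)
    (hEA : E * A = A) : Ap * E = Ap := by
  have h1 : Aᴴ * E = Aᴴ := by
    calc Aᴴ * E = (E * A)ᴴ := by rw [conjTranspose_mul, hE]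
      _ = Aᴴ := by rw [hEA]
  have hP : Ap * (A * Ap) = Ap := by rw [← Matrix.mul_assoc, h.2.1]
  calc Ap * E = (Ap * (A * Ap)) * E := by rw [hP]
    _ = Ap * ((A * Ap)ᴴ * E) := by rw [h.2.2.1, Matrix.mul_assoc]
    _ = Ap * (Apᴴ * (Aᴴ * E)) := by rw [conjTranspose_mul, Matrix.mul_assoc]
    _ = Ap * (Apᴴ * Aᴴ) := by rw [h1]
    _ = Ap * (A * Ap)ᴴ := by rw [conjTranspose_mul]
    _ = Ap * (A * Ap) := by rw [h.2.2.1]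
    _ = Ap := hP

/-- If `E` is Hermitian and `A * E = A` then `E * Ap = Ap`. -/
lemma IsMPInv.absorb_right (h : IsMPInv A Ap) (E : Matrix n n Hq) (hE : Eᴴ = E)
    (hAE : A * E = A) : E * Ap = Ap := by
  have h1 : E * Aᴴ = Aᴴ := by
    calc E * Aᴴ = (A * E)ᴴ := by rw [conjTranspose_mul, hE]
      _ = Aᴴ := by rw [hAE]
  have hP : (Ap * A) * Ap = Ap := h.2.1
  calc E * Ap = E * ((Ap * A) * Ap) := by rw [hP]
    _ = E * ((Ap * A)ᴴ * Ap) := by rw [h.2.2.2]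
    _ = E * (Aᴴ * (Apᴴ * Ap)) := by rw [conjTranspose_mul, Matrix.mul_assoc]
    _ = (E * Aᴴ) * (Apᴴ * Ap) := by rw [Matrix.mul_assoc]
    _ = Aᴴ * (Apᴴ * Ap) := by rw [h1]
    _ = (Ap * A)ᴴ * Ap := by rw [conjTranspose_mul, Matrix.mul_assoc]
    _ = (Ap * A) * Ap := by rw [h.2.2.2]
    _ = Ap := hP

end MPAPI

section Helpers

variable {l m n k : Type*} [Fintype l] [Fintype m] [Fintype n] [Fintype k]

/-- Reassociation helper: from `A * B = C` deduce `A * (B * X) = C * X`. -/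
lemma mul_absorb {A : Matrix l m Hq} {B : Matrix m n Hq} {C : Matrix l n Hq}
    (h : A * B = C) (X : Matrix n k Hq) : A * (B * X) = C * X := by
  rw [← Matrix.mul_assoc, h]

end Helpers

section GLemma

variable {n : Type*} [Fintype n] [DecidableEq n]

lemma proj_fromCols (L₂ L₄ : Matrix n n Hq) (hH : L₂ᴴ = L₂) (hI : L₂ * L₂ = L₂)
    (h24 : L₂ * L₄ = L₄) (Cc : Matrix n (n ⊕ n) Hq) (hCc : Cc = Matrix.fromCols L₂ L₄)
    (Ccp : Matrix (n ⊕ n) n Hq) (h : IsMPInv Cc Ccp) : Cc * Ccp = L₂ := by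
  have h1 : L₂ * Cc = Cc := by rw [hCc, Matrix.mul_fromCols, hI, h24]
  have h2 : Cc * (Matrix.fromRows (1 : Matrix n n Hq) 0 : Matrix (n ⊕ n) n Hq) = L₂ := by
    rw [hCc, Matrix.fromCols_mul_fromRows, Matrix.mul_one, Matrix.mul_zero, add_zero]
  have h3 : (Cc * Ccp) * L₂ = L₂ := by
    calc (Cc * Ccp) * L₂ = (Cc * Ccp) * (Cc * (Matrix.fromRows (1 : Matrix n n Hq) 0 : Matrix (n ⊕ n) n Hq)) := by rw [h2]
      _ = ((Cc * Ccp) * Cc) * (Matrix.fromRows (1 : Matrix n n Hq) 0 : Matrix (n ⊕ n) n Hq) := by simp only [Matrix.mul_assoc]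
      _ = Cc * (Matrix.fromRows (1 : Matrix n n Hq) 0 : Matrix (n ⊕ n) n Hq) := by rw [h.1]
      _ = L₂ := h2
  have h4 : L₂ * (Cc * Ccp) = Cc * Ccp := by rw [← Matrix.mul_assoc, h1]
  calc Cc * Ccp = L₂ * (Cc * Ccp) := h4.symm
    _ = ((Cc * Ccp)ᴴ * L₂ᴴ)ᴴ := by rw [← conjTranspose_mul, conjTranspose_conjTranspose]
    _ = ((Cc * Ccp) * L₂)ᴴ := by rw [h.2.2.1, hH]
    _ = L₂ᴴ := by rw [h3]
    _ = L₂ := hH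

end GLemma

section Constructions

variable {η : Hq} (h2 : η * η = -1) (hs : star η = -η)
variable {P Na Nb : Type*} [Fintype P] [DecidableEq P] [Fintype Na] [DecidableEq Na]
  [Fintype Nb] [DecidableEq Nb]

include h2 hs in
/-- One-term lemma: if `D` is η-Hermitian and `(1 - a aᵖ) D = 0` then
`Y := aᵖ D (aᵖ)^{η*}` is an η-Hermitian solution of `a Y a^{η*} = D`. -/
lemma oneterm (a : Matrix P Na Hq) (ap : Matrix Na P Hq) (h : IsMPInv a ap)
    (D : Matrix P P Hq) (hD : etaCT η D = D) (h0 : (1 - a * ap) * D = 0) :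
    etaCT η (ap * D * etaCT η ap) = ap * D * etaCT η ap ∧
      a * (ap * D * etaCT η ap) * etaCT η a = D := by
  have hPD : (a * ap) * D = D := by
    have := h0
    rw [Matrix.sub_mul, Matrix.one_mul, sub_eq_zero] at this
    exact this.symm
  constructor
  · simp only [etaCT_mul h2, etaCT_etaCT h2 hs, hD, Matrix.mul_assoc]
  · have hDQ : D * etaCT η (a * ap) = D := by
      calc D * etaCT η (a * ap) = etaCT η ((a * ap) * D) := by
            simp only [etaCT_mul h2, hD]
        _ = D := by rw [hPD, hD]
    calc a * (ap * D * etaCT η ap) * etaCT η a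
        = (a * ap) * (D * (etaCT η ap * etaCT η a)) := by simp only [Matrix.mul_assoc]
      _ = (a * ap) * (D * etaCT η (a * ap)) := by rw [← etaCT_mul h2]
      _ = (a * ap) * D := by rw [hDQ]
      _ = D := hPD

end Constructions

section TwoTerm

variable {η : Hq} (h2 : η * η = -1) (hs : star η = -η)
variable {P Na Nb : Type*} [Fintype P] [DecidableEq P] [Fintype Na] [DecidableEq Na]
  [Fintype Nb] [DecidableEq Nb]

include h2 hs in
/-- Two-term lemma: solvability of `a Y₁ a^{η*} + b Y₂ b^{η*} = S` in η-Hermitian `Y₁, Y₂`. -/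
lemma twoterm (a : Matrix P Na Hq) (ap : Matrix Na P Hq) (ha : IsMPInv a ap)
    (b : Matrix P Nb Hq) (bp : Matrix Nb P Hq) (hb : IsMPInv b bp)
    (M : Matrix P Nb Hq) (hM : M = (1 - a * ap) * b)
    (Mp : Matrix Nb P Hq) (hMp : IsMPInv M Mp)
    (S : Matrix P P Hq) (hS : etaCT η S = S)
    (hc1 : (1 - M * Mp) * ((1 - a * ap) * S) = 0)
    (hc2 : ((1 - a * ap) * S) * etaCT η (1 - b * bp) = 0) :
    ∃ (Y₁ : Matrix Na Na Hq) (Y₂ : Matrix Nb Nb Hq), etaCT η Y₁ = Y₁ ∧ etaCT η Y₂ = Y₂ ∧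
      a * Y₁ * etaCT η a + b * Y₂ * etaCT η b = S := by
  set Ra : Matrix P P Hq := 1 - a * ap with hRa
  have hRaH : Raᴴ = Ra := ha.R_herm
  have hRaRa : Ra * Ra = Ra := ha.R_idem
  have hRab : Ra * b = M := by rw [hM]
  have hRaM : Ra * M = M := by rw [hM, ← Matrix.mul_assoc, hRaRa]
  have hMpRa : Mp * Ra = Mp := hMp.absorb_left Ra hRaH hRaM
  have hRaPa : Ra * (a * ap) = 0 := by
    rw [hRa, Matrix.sub_mul, Matrix.one_mul, Matrix.mul_assoc,
      ← Matrix.mul_assoc ap a ap, ha.2.1, sub_self]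
  have hMpPa : Mp * (a * ap) = 0 := by
    rw [← hMpRa, Matrix.mul_assoc, hRaPa, Matrix.mul_zero]
  have hMpb : Mp * b = Mp * M := by
    have e : Mp * (Ra * b) = Mp * b - Mp * ((a * ap) * b) := by
      rw [hRa, Matrix.sub_mul, Matrix.one_mul, Matrix.mul_sub]
    rw [hRab] at e
    rw [e, ← Matrix.mul_assoc, hMpPa, Matrix.zero_mul, sub_zero]
  have hbpb : b * (bp * b) = b := by rw [← Matrix.mul_assoc, hb.1]
  have hMbpb : M * (bp * b) = M := by rw [← hRab, Matrix.mul_assoc, hbpb]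
  -- reduced data
  set N : Matrix P P Hq := Ra * S with hN
  have hN1 : M * (Mp * N) = N := by
    have h0 := hc1
    rw [Matrix.sub_mul, Matrix.one_mul, sub_eq_zero] at h0
    rw [← Matrix.mul_assoc, ← h0]
  have hN2 : N * etaCT η (b * bp) = N := by
    have h0 := hc2
    rw [etaCT_sub, etaCT_one h2, Matrix.mul_sub, Matrix.mul_one, sub_eq_zero] at h0
    exact h0.symm
  have hNe : etaCT η N = S * etaCT η Ra := by
    rw [hN, etaCT_mul h2, hS]
  -- constructions
  set LM : Matrix Nb Nb Hq := 1 - Mp * M with hLM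
  have hMLM : M * LM = 0 := hMp.mul_L
  set w : Matrix P P Hq := b * (LM * bp) with hw
  set Z0 : Matrix Nb Nb Hq := Mp * (N * etaCT η Ra) * etaCT η Mp with hZ0
  set D1 : Matrix Nb Nb Hq := Mp * (N * (etaCT η w * etaCT η bp)) with hD1
  set Y₂ : Matrix Nb Nb Hq := Z0 + D1 + etaCT η D1 with hY2
  have hZ0h : etaCT η Z0 = Z0 := by
    rw [hZ0, hN]
    simp only [etaCT_mul h2, etaCT_etaCT h2 hs, hS, Matrix.mul_assoc]
  have hY2h : etaCT η Y₂ = Y₂ := by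
    rw [hY2, etaCT_add, etaCT_add, hZ0h, etaCT_etaCT h2 hs]
    abel
  -- key computation : M * Y₂ * etaCT η b = N
  have e1 : etaCT η Mp * etaCT η b = etaCT η (b * Mp) := (etaCT_mul h2 b Mp).symm
  have e1b : etaCT η bp * etaCT η b = etaCT η (b * bp) := (etaCT_mul h2 b bp).symm
  have ht1 : M * Z0 * etaCT η b = N * etaCT η (b * Mp) := by
    have e2 : etaCT η Ra * etaCT η (b * Mp) = etaCT η (b * Mp) := by
      rw [← etaCT_mul h2]
      congr 1
      rw [Matrix.mul_assoc, hMpRa]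
    calc M * Z0 * etaCT η b
        = M * (Mp * (N * (etaCT η Ra * (etaCT η Mp * etaCT η b)))) := by
          rw [hZ0]; simp only [Matrix.mul_assoc]
      _ = M * (Mp * (N * (etaCT η Ra * etaCT η (b * Mp)))) := by rw [e1]
      _ = M * (Mp * (N * etaCT η (b * Mp))) := by rw [e2]
      _ = (M * (Mp * N)) * etaCT η (b * Mp) := by simp only [Matrix.mul_assoc]
      _ = N * etaCT η (b * Mp) := by rw [hN1]
  have ht2 : M * D1 * etaCT η b = N * etaCT η w := by
    have e2' : b * bp * w = w := by rw [hw, ← Matrix.mul_assoc, hb.1]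
    have e2 : etaCT η w * etaCT η (b * bp) = etaCT η w := by
      rw [← etaCT_mul h2, e2']
    calc M * D1 * etaCT η b
        = M * (Mp * (N * (etaCT η w * (etaCT η bp * etaCT η b)))) := by
          rw [hD1]; simp only [Matrix.mul_assoc]
      _ = M * (Mp * (N * (etaCT η w * etaCT η (b * bp)))) := by rw [e1b]
      _ = M * (Mp * (N * etaCT η w)) := by rw [e2]
      _ = (M * (Mp * N)) * etaCT η w := by simp only [Matrix.mul_assoc]
      _ = N * etaCT η w := by rw [hN1]
  have hD1e : etaCT η D1 = bp * (w * (etaCT η N * etaCT η Mp)) := by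
    rw [hD1, hw, hN]
    simp only [etaCT_mul h2, etaCT_etaCT h2 hs, hS, Matrix.mul_assoc]
  have ht3 : M * etaCT η D1 * etaCT η b = 0 := by
    calc M * etaCT η D1 * etaCT η b
        = (M * (bp * b)) * (LM * (bp * (etaCT η N * (etaCT η Mp * etaCT η b)))) := by
          rw [hD1e, hw]; simp only [Matrix.mul_assoc]
      _ = (M * LM) * (bp * (etaCT η N * (etaCT η Mp * etaCT η b))) := by
          rw [hMbpb]; simp only [Matrix.mul_assoc]
      _ = 0 := by rw [hMLM, Matrix.zero_mul]
  have hwsplit : N * etaCT η w = N - N * etaCT η (b * Mp) := by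
    have e3 : w = b * bp - b * Mp * (b * bp) := by
      rw [hw, hLM, Matrix.sub_mul, Matrix.one_mul, Matrix.mul_sub]
      congr 1
      rw [← hMpb]
      simp only [Matrix.mul_assoc]
    calc N * etaCT η w
        = N * (etaCT η (b * bp) - etaCT η (b * bp) * etaCT η (b * Mp)) := by
          rw [e3, etaCT_sub, etaCT_mul h2 (b * Mp) (b * bp)]
      _ = N - N * etaCT η (b * Mp) := by
          rw [Matrix.mul_sub, hN2, ← Matrix.mul_assoc, hN2]
  have hKey : M * Y₂ * etaCT η b = N := by
    calc M * Y₂ * etaCT η b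
        = M * Z0 * etaCT η b + M * D1 * etaCT η b + M * etaCT η D1 * etaCT η b := by
          rw [hY2]
          simp only [Matrix.mul_add, Matrix.add_mul]
      _ = N * etaCT η (b * Mp) + N * etaCT η w + 0 := by rw [ht1, ht2, ht3]
      _ = N := by rw [hwsplit]; abel
  -- finish
  set D : Matrix P P Hq := S - b * Y₂ * etaCT η b with hD
  have hDh : etaCT η D = D := by
    rw [hD, etaCT_sub, hS]
    congr 1
    simp only [etaCT_mul h2, etaCT_etaCT h2 hs, hY2h, Matrix.mul_assoc]
  have hRaD : (1 - a * ap) * D = 0 := by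
    rw [← hRa, hD, Matrix.mul_sub, ← hN]
    have e : Ra * (b * Y₂ * etaCT η b) = M * Y₂ * etaCT η b := by
      rw [← hRab]
      simp only [Matrix.mul_assoc]
    rw [e, hKey, sub_self]
  obtain ⟨hY1h, hY1⟩ := oneterm h2 hs a ap ha D hDh hRaD
  refine ⟨ap * D * etaCT η ap, Y₂, hY1h, hY2h, ?_⟩
  rw [hY1, hD]
  abel

end TwoTerm

section MPAPI2

variable {m n : Type*} [Fintype m] [Fintype n] [DecidableEq m] [DecidableEq n]
  {A : Matrix m n Hq} {Ap : Matrix n m Hq}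

lemma IsMPInv.m1 (h : IsMPInv A Ap) : A * (Ap * A) = A := by
  rw [← Matrix.mul_assoc, h.1]

lemma IsMPInv.m2 (h : IsMPInv A Ap) : Ap * (A * Ap) = Ap := by
  rw [← Matrix.mul_assoc, h.2.1]

end MPAPI2

/-- For Hermitian `A, B, C`, `A * B = C` implies `B * A = C`. -/
lemma herm_mul_comm {n : Type*} [Fintype n] {A B C : Matrix n n Hq}
    (hA : Aᴴ = A) (hB : Bᴴ = B) (hC : Cᴴ = C) (h : A * B = C) : B * A = C := by
  calc B * A = Bᴴ * Aᴴ := by rw [hA, hB]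
    _ = (A * B)ᴴ := by rw [conjTranspose_mul]
    _ = Cᴴ := by rw [h]
    _ = C := hC

section etaCTsmul

variable {η : Hq}

lemma etaCT_rsmul {m n : Type*} (c : ℝ) (A : Matrix m n Hq) :
    etaCT η (c • A) = c • etaCT η A := by
  refine Matrix.ext fun s t => ?_
  simp only [etaCT, Matrix.of_apply, Matrix.smul_apply]
  rw [Quaternion.star_smul, mul_smul_comm, smul_mul_assoc]

end etaCTsmul

set_option maxHeartbeats 16000000 in
/-- Theorem 4.1 (1) ⇔ (2): solvability conditions for the η-Hermitian equation
`A₁X₁ + (A₁X₁)^{η*} + A₂Y₁A₂^{η*} + A₃Y₂A₃^{η*} + A₄Y₃A₄^{η*} = B`. -/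
private theorem stmt14_aux {p a a₂ a₃ a₄ : ℕ} (η : Hq) (hη : η = qi ∨ η = qj ∨ η = qk)
    (A₁ : Matrix (Fin p) (Fin a) Hq) (A₂ : Matrix (Fin p) (Fin a₂) Hq)
    (A₃ : Matrix (Fin p) (Fin a₃) Hq) (A₄ : Matrix (Fin p) (Fin a₄) Hq)
    (B : Matrix (Fin p) (Fin p) Hq) (hB : B = etaCT η B)
    (A₁p : Matrix (Fin a) (Fin p) Hq) (hA₁p : IsMPInv A₁ A₁p)
    (A₁₁ : Matrix (Fin p) (Fin a₂) Hq) (hA₁₁ : A₁₁ = (1 - A₁ * A₁p) * A₂)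
    (A₂₂ : Matrix (Fin p) (Fin a₃) Hq) (hA₂₂ : A₂₂ = (1 - A₁ * A₁p) * A₃)
    (A₃₃ : Matrix (Fin p) (Fin a₄) Hq) (hA₃₃ : A₃₃ = (1 - A₁ * A₁p) * A₄)
    (A₁₁p : Matrix (Fin a₂) (Fin p) Hq) (hA₁₁p : IsMPInv A₁₁ A₁₁p)
    (A₂₂p : Matrix (Fin a₃) (Fin p) Hq) (hA₂₂p : IsMPInv A₂₂ A₂₂p)
    (M₁ : Matrix (Fin p) (Fin a₃) Hq) (hM₁ : M₁ = (1 - A₁₁ * A₁₁p) * A₂₂)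
    (M₁p : Matrix (Fin a₃) (Fin p) Hq) (hM₁p : IsMPInv M₁ M₁p)
    (T₁ : Matrix (Fin p) (Fin p) Hq)
    (hT₁ : T₁ = (1 - A₁ * A₁p) * B * etaCT η (1 - A₁ * A₁p))
    (C : Matrix (Fin p) (Fin p) Hq) (hC : C = (1 - M₁ * M₁p) * (1 - A₁₁ * A₁₁p))
    (C₁ : Matrix (Fin p) (Fin a₄) Hq) (hC₁ : C₁ = C * A₃₃)
    (C₂ : Matrix (Fin p) (Fin a₄) Hq) (hC₂ : C₂ = (1 - A₁₁ * A₁₁p) * A₃₃)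
    (C₃ : Matrix (Fin p) (Fin a₄) Hq) (hC₃ : C₃ = (1 - A₂₂ * A₂₂p) * A₃₃)
    (C₄ : Matrix (Fin p) (Fin a₄) Hq) (hC₄ : C₄ = A₃₃)
    (E₁ : Matrix (Fin p) (Fin p) Hq) (hE₁ : E₁ = C * T₁)
    (E₂ : Matrix (Fin p) (Fin p) Hq)
    (hE₂ : E₂ = (1 - A₁₁ * A₁₁p) * T₁ * etaCT η (1 - A₂₂ * A₂₂p))
    (E₃ : Matrix (Fin p) (Fin p) Hq)
    (hE₃ : E₃ = (1 - A₂₂ * A₂₂p) * T₁ * etaCT η (1 - A₁₁ * A₁₁p))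
    (E₄ : Matrix (Fin p) (Fin p) Hq) (hE₄ : E₄ = T₁ * etaCT η C)
    (C₁p : Matrix (Fin a₄) (Fin p) Hq) (hC₁p : IsMPInv C₁ C₁p)
    (C₂p : Matrix (Fin a₄) (Fin p) Hq) (hC₂p : IsMPInv C₂ C₂p)
    (C₃p : Matrix (Fin a₄) (Fin p) Hq) (hC₃p : IsMPInv C₃ C₃p)
    (C₄p : Matrix (Fin a₄) (Fin p) Hq) (hC₄p : IsMPInv C₄ C₄p)
    (C₁₁ : Matrix (Fin a₄) (Fin a₄ ⊕ Fin a₄) Hq)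
    (hC₁₁ : C₁₁ = Matrix.fromCols (1 - C₂p * C₂) (1 - C₄p * C₄))
    (C₁₁p : Matrix (Fin a₄ ⊕ Fin a₄) (Fin a₄) Hq) (hC₁₁p : IsMPInv C₁₁ C₁₁p)
    (C₂₂ : Matrix (Fin a₄) (Fin a₄) Hq) (hC₂₂ : C₂₂ = 1 - C₁p * C₁)
    (C₃₃ : Matrix (Fin a₄) (Fin a₄) Hq) (hC₃₃ : C₃₃ = 1 - C₃p * C₃)
    (E₁₁ : Matrix (Fin a₄) (Fin a₄) Hq) (hE₁₁ : E₁₁ = (1 - C₁₁ * C₁₁p) * C₂₂)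
    (E₂₂ : Matrix (Fin a₄) (Fin a₄) Hq) (hE₂₂ : E₂₂ = (1 - C₁₁ * C₁₁p) * C₃₃)
    (E₂₂p : Matrix (Fin a₄) (Fin a₄) Hq) (hE₂₂p : IsMPInv E₂₂ E₂₂p)
    (F₁ : Matrix (Fin a₄) (Fin a₄) Hq)
    (hF₁ : F₁ = C₁p * E₁ * etaCT η C₄p + (1 - C₁p * C₁) * C₂p * E₂ * etaCT η C₃p)
    (F₂ : Matrix (Fin a₄) (Fin a₄) Hq)
    (hF₂ : F₂ = C₃p * E₃ * etaCT η C₂p + (1 - C₃p * C₃) * C₄p * E₄ * etaCT η C₁p)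
    (F : Matrix (Fin a₄) (Fin a₄) Hq) (hF : F = F₂ - F₁)
    (E : Matrix (Fin a₄) (Fin a₄) Hq)
    (hE : E = (1 - C₁₁ * C₁₁p) * F * etaCT η (1 - C₁₁ * C₁₁p)) :
    (∃ (X₁ : Matrix (Fin a) (Fin p) Hq) (Y₁ : Matrix (Fin a₂) (Fin a₂) Hq)
        (Y₂ : Matrix (Fin a₃) (Fin a₃) Hq) (Y₃ : Matrix (Fin a₄) (Fin a₄) Hq),
        Y₁ = etaCT η Y₁ ∧ Y₂ = etaCT η Y₂ ∧ Y₃ = etaCT η Y₃ ∧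
        A₁ * X₁ + etaCT η (A₁ * X₁) + A₂ * Y₁ * etaCT η A₂
          + A₃ * Y₂ * etaCT η A₃ + A₄ * Y₃ * etaCT η A₄ = B) ↔
      ((1 - C₁ * C₁p) * E₁ = 0 ∧ (1 - C₂ * C₂p) * E₂ = 0 ∧
       (1 - C₃ * C₃p) * E₃ = 0 ∧ (1 - C₄ * C₄p) * E₄ = 0 ∧
       (1 - E₂₂ * E₂₂p) * E * etaCT η (1 - E₂₂ * E₂₂p) = 0) := by
  have h2 : η * η = -1 := eta_mul_self hη
  have hs : star η = -η := eta_star hη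
  -- abbreviations
  set R1 : Matrix (Fin p) (Fin p) Hq := 1 - A₁ * A₁p with hR1
  set Ra : Matrix (Fin p) (Fin p) Hq := 1 - A₁₁ * A₁₁p with hRaD
  set Rb : Matrix (Fin p) (Fin p) Hq := 1 - A₂₂ * A₂₂p with hRbD
  set Rm : Matrix (Fin p) (Fin p) Hq := 1 - M₁ * M₁p with hRmD
  set P1 : Matrix (Fin a₄) (Fin a₄) Hq := C₁p * C₁ with hP1D
  set P2 : Matrix (Fin a₄) (Fin a₄) Hq := C₂p * C₂ with hP2D
  set P3 : Matrix (Fin a₄) (Fin a₄) Hq := C₃p * C₃ with hP3D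
  set P4 : Matrix (Fin a₄) (Fin a₄) Hq := C₄p * C₄ with hP4D
  set L1 : Matrix (Fin a₄) (Fin a₄) Hq := 1 - P1 with hL1D
  set L2 : Matrix (Fin a₄) (Fin a₄) Hq := 1 - P2 with hL2D
  set L3 : Matrix (Fin a₄) (Fin a₄) Hq := 1 - P3 with hL3D
  set L4 : Matrix (Fin a₄) (Fin a₄) Hq := 1 - P4 with hL4D
  -- Hermitian / idempotent basics
  have hRaH : Raᴴ = Ra := hA₁₁p.R_herm
  have hRbH : Rbᴴ = Rb := hA₂₂p.R_herm
  have hRmH : Rmᴴ = Rm := hM₁p.R_herm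
  have hRaI : Ra * Ra = Ra := hA₁₁p.R_idem
  have hRbI : Rb * Rb = Rb := hA₂₂p.R_idem
  have hRmI : Rm * Rm = Rm := hM₁p.R_idem
  have hR1I : R1 * R1 = R1 := hA₁p.R_idem
  have hRaA : Ra * A₁₁ = 0 := hA₁₁p.R_mul
  have hRbA : Rb * A₂₂ = 0 := hA₂₂p.R_mul
  have hRmM : Rm * M₁ = 0 := hM₁p.R_mul
  have hR1A : R1 * A₁ = 0 := hA₁p.R_mul
  -- M and C structure
  have hRaM : Ra * M₁ = M₁ := by rw [hM₁, ← Matrix.mul_assoc, hRaI]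
  have hRaPm : Ra * (M₁ * M₁p) = M₁ * M₁p := by rw [← Matrix.mul_assoc, hRaM]
  have hPmRa : (M₁ * M₁p) * Ra = M₁ * M₁p :=
    herm_mul_comm hRaH hM₁p.2.2.1 hM₁p.2.2.1 hRaPm
  have hComm : Rm * Ra = Ra * Rm := by
    have e1 : Rm * Ra = Ra - M₁ * M₁p := by
      rw [hRmD, Matrix.sub_mul, Matrix.one_mul, hPmRa]
    have e2 : Ra * Rm = Ra - M₁ * M₁p := by
      rw [hRmD, Matrix.mul_sub, Matrix.mul_one, hRaPm]
    rw [e1, e2]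
  have hCRm2 : C = Ra * Rm := by rw [hC, hComm]
  have hCI : C * C = C := by
    calc C * C = Rm * ((Ra * Rm) * Ra) := by rw [hC]; simp only [Matrix.mul_assoc]
      _ = Rm * ((Rm * Ra) * Ra) := by rw [← hComm]
      _ = (Rm * Rm) * (Ra * Ra) := by simp only [Matrix.mul_assoc]
      _ = C := by rw [hRmI, hRaI, hC]
  have hCH : Cᴴ = C := by
    rw [hC, conjTranspose_mul, hRaH, hRmH, ← hComm]
  have hCa : C * A₁₁ = 0 := by rw [hC, Matrix.mul_assoc, hRaA, Matrix.mul_zero]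
  have hCb : C * A₂₂ = 0 := by
    rw [hC, Matrix.mul_assoc]
    have : Ra * A₂₂ = M₁ := hM₁.symm
    rw [this, hRmM]
  have hCRb : C * Rb = C := by
    rw [hRbD, Matrix.mul_sub, Matrix.mul_one, ← Matrix.mul_assoc, hCb, Matrix.zero_mul, sub_zero]
  have hRbC : Rb * C = C := herm_mul_comm hCH hRbH hCH hCRb
  have hRaC : Ra * C = C := by
    calc Ra * C = (Ra * Ra) * Rm := by rw [hCRm2, Matrix.mul_assoc]
      _ = C := by rw [hRaI, hCRm2]
  have hCRa : C * Ra = C := by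
    calc C * Ra = Rm * (Ra * Ra) := by rw [hC, Matrix.mul_assoc]
      _ = C := by rw [hRaI, hC]
  have hRmC : Rm * C = C := by
    calc Rm * C = (Rm * Rm) * Ra := by rw [hC, Matrix.mul_assoc]
      _ = C := by rw [hRmI, hC]
  -- C-column structure
  have hC2' : C₂ = Ra * C₄ := by rw [hC₂, hC₄]
  have hC3' : C₃ = Rb * C₄ := by rw [hC₃, hC₄]
  have hC1' : C₁ = C * C₄ := by rw [hC₁, hC₄]
  have hC1Rm : C₁ = Rm * C₂ := by rw [hC1', hC, Matrix.mul_assoc, ← hC2']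
  have hC1C3 : C₁ = C * C₃ := by
    rw [hC3', ← Matrix.mul_assoc, hCRb, hC1']
  have hRaC2 : Ra * C₂ = C₂ := by rw [hC2', ← Matrix.mul_assoc, hRaI]
  have hRbC3 : Rb * C₃ = C₃ := by rw [hC3', ← Matrix.mul_assoc, hRbI]
  have hCC1 : C * C₁ = C₁ := by rw [hC1', ← Matrix.mul_assoc, hCI]
  have hRaC1 : Ra * C₁ = C₁ := by rw [hC1', ← Matrix.mul_assoc, hRaC]
  have hRbC1 : Rb * C₁ = C₁ := by rw [hC1', ← Matrix.mul_assoc, hRbC]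
  have hRmC1 : Rm * C₁ = C₁ := by rw [hC1', ← Matrix.mul_assoc, hRmC]
  -- pseudoinverse absorptions
  have hC2pRa : C₂p * Ra = C₂p := hC₂p.absorb_left Ra hRaH hRaC2
  have hC3pRb : C₃p * Rb = C₃p := hC₃p.absorb_left Rb hRbH hRbC3
  have hC1pC : C₁p * C = C₁p := hC₁p.absorb_left C hCH hCC1
  have hC1pRa : C₁p * Ra = C₁p := hC₁p.absorb_left Ra hRaH hRaC1
  have hC1pRb : C₁p * Rb = C₁p := hC₁p.absorb_left Rb hRbH hRbC1
  have hC1pRm : C₁p * Rm = C₁p := hC₁p.absorb_left Rm hRmH hRmC1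
  have hC1pC4 : C₁p * C₄ = P1 := by
    rw [← hC1pC, Matrix.mul_assoc, ← hC1', hP1D]
  have hC2pC4 : C₂p * C₄ = P2 := by
    rw [← hC2pRa, Matrix.mul_assoc, ← hC2', hP2D]
  have hC3pC4 : C₃p * C₄ = P3 := by
    rw [← hC3pRb, Matrix.mul_assoc, ← hC3', hP3D]
  -- lattice of projections
  have hC1P2 : C₁ * P2 = C₁ := by
    rw [hP2D, hC1Rm, Matrix.mul_assoc, ← Matrix.mul_assoc C₂ C₂p C₂, hC₂p.1]
  have hC1P3 : C₁ * P3 = C₁ := by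
    rw [hP3D, hC1C3, Matrix.mul_assoc, ← Matrix.mul_assoc C₃ C₃p C₃, hC₃p.1]
  have hC1P4 : C₁ * P4 = C₁ := by
    rw [hP4D, hC1', Matrix.mul_assoc, ← Matrix.mul_assoc C₄ C₄p C₄, hC₄p.1]
  have hC2P4 : C₂ * P4 = C₂ := by
    rw [hP4D, hC2', Matrix.mul_assoc, ← Matrix.mul_assoc C₄ C₄p C₄, hC₄p.1]
  have hC3P4 : C₃ * P4 = C₃ := by
    rw [hP4D, hC3', Matrix.mul_assoc, ← Matrix.mul_assoc C₄ C₄p C₄, hC₄p.1]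
  have hP1H : P1ᴴ = P1 := hC₁p.2.2.2
  have hP2H : P2ᴴ = P2 := hC₂p.2.2.2
  have hP3H : P3ᴴ = P3 := hC₃p.2.2.2
  have hP4H : P4ᴴ = P4 := hC₄p.2.2.2
  have hP1I : P1 * P1 = P1 := hC₁p.P_idem
  have hP2I : P2 * P2 = P2 := hC₂p.P_idem
  have hP3I : P3 * P3 = P3 := hC₃p.P_idem
  have hP4I : P4 * P4 = P4 := hC₄p.P_idem
  have hP12 : P1 * P2 = P1 := by rw [hP1D, Matrix.mul_assoc, hC1P2]
  have hP13 : P1 * P3 = P1 := by rw [hP1D, Matrix.mul_assoc, hC1P3]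
  have hP14 : P1 * P4 = P1 := by rw [hP1D, Matrix.mul_assoc, hC1P4]
  have hP24 : P2 * P4 = P2 := by rw [hP2D, Matrix.mul_assoc, hC2P4]
  have hP34 : P3 * P4 = P3 := by rw [hP3D, Matrix.mul_assoc, hC3P4]
  have hP21 : P2 * P1 = P1 := herm_mul_comm hP1H hP2H hP1H hP12
  have hP31 : P3 * P1 = P1 := herm_mul_comm hP1H hP3H hP1H hP13
  have hP41 : P4 * P1 = P1 := herm_mul_comm hP1H hP4H hP1H hP14
  have hP42 : P4 * P2 = P2 := herm_mul_comm hP2H hP4H hP2H hP24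
  have hP43 : P4 * P3 = P3 := herm_mul_comm hP3H hP4H hP3H hP34
  have hP2C1p : P2 * C₁p = C₁p := hC₁p.absorb_right P2 hP2H hC1P2
  have hP3C1p : P3 * C₁p = C₁p := hC₁p.absorb_right P3 hP3H hC1P3
  have hP4C1p : P4 * C₁p = C₁p := hC₁p.absorb_right P4 hP4H hC1P4
  have hP4C2p : P4 * C₂p = C₂p := hC₂p.absorb_right P4 hP4H hC2P4
  have hP4C3p : P4 * C₃p = C₃p := hC₃p.absorb_right P4 hP4H hC3P4
  have hP1C1p : P1 * C₁p = C₁p := by rw [hP1D, Matrix.mul_assoc, ← Matrix.mul_assoc, hC₁p.2.1]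
  have hP2C2p : P2 * C₂p = C₂p := by rw [hP2D, Matrix.mul_assoc, ← Matrix.mul_assoc, hC₂p.2.1]
  have hP3C3p : P3 * C₃p = C₃p := by rw [hP3D, Matrix.mul_assoc, ← Matrix.mul_assoc, hC₃p.2.1]
  have hP4C4p : P4 * C₄p = C₄p := by rw [hP4D, Matrix.mul_assoc, ← Matrix.mul_assoc, hC₄p.2.1]
  -- the identification 1 - C₁₁ C₁₁p = P2
  have hL2H : L2ᴴ = L2 := by rw [hL2D, conjTranspose_sub, conjTranspose_one, hP2H]
  have hL2I : L2 * L2 = L2 := by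
    rw [hL2D, sub_mul, one_mul, mul_sub, mul_one, hP2I]; abel
  have hL24 : L2 * L4 = L4 := by
    rw [hL2D, hL4D, sub_mul, one_mul, mul_sub, mul_one, hP24]; abel
  have hG : C₁₁ * C₁₁p = L2 := by
    refine proj_fromCols L2 L4 hL2H hL2I hL24 C₁₁ ?_ C₁₁p hC₁₁p
    rw [hC₁₁, hL2D, hL4D, hP2D, hP4D]
  have hRG : 1 - C₁₁ * C₁₁p = P2 := by rw [hG, hL2D, sub_sub_cancel]
  have hE22P : E₂₂ = P2 * L3 := by rw [hE₂₂, hRG, hC₃₃, hL3D, hP3D]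
  have hEP : E = P2 * F * etaCT η P2 := by rw [hE, hRG]
  have hP2E22 : P2 * E₂₂ = E₂₂ := by rw [hE22P, ← Matrix.mul_assoc, hP2I]
  have hE22L3 : E₂₂ * L3 = E₂₂ := by
    rw [hE22P, Matrix.mul_assoc]
    congr 1
    rw [hL3D, sub_mul, one_mul, mul_sub, mul_one, hP3I]; abel
  have hE22H2 : E₂₂p * P2 = E₂₂p := hE₂₂p.absorb_left P2 hP2H hP2E22
  have hL3E22p : L3 * E₂₂p = E₂₂p := by
    refine hE₂₂p.absorb_right L3 ?_ hE22L3
    rw [hL3D, conjTranspose_sub, conjTranspose_one, hP3H]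
  have hP1L3 : P1 * L3 = 0 := by rw [hL3D, mul_sub, mul_one, hP13, sub_self]
  have hP3L3 : P3 * L3 = 0 := by rw [hL3D, mul_sub, mul_one, hP3I, sub_self]
  -- η-Hermitian T₁
  have hTh : etaCT η T₁ = T₁ := by
    rw [hT₁]
    simp only [etaCT_mul h2, etaCT_etaCT h2 hs, ← hB, Matrix.mul_assoc]
  -- Q-world facts
  have hQ21 : etaCT η P2 * etaCT η P1 = etaCT η P1 := by rw [← etaCT_mul h2, hP12]
  have hQ12 : etaCT η P1 * etaCT η P2 = etaCT η P1 := by rw [← etaCT_mul h2, hP21]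
  have hQ42 : etaCT η P4 * etaCT η P2 = etaCT η P2 := by rw [← etaCT_mul h2, hP24]
  have hQ43 : etaCT η P4 * etaCT η P3 = etaCT η P3 := by rw [← etaCT_mul h2, hP34]
  have hQ41 : etaCT η P4 * etaCT η P1 = etaCT η P1 := by rw [← etaCT_mul h2, hP14]
  have hQ31 : etaCT η P3 * etaCT η P1 = etaCT η P1 := by rw [← etaCT_mul h2, hP13]
  have hQ2I : etaCT η P2 * etaCT η P2 = etaCT η P2 := by rw [← etaCT_mul h2, hP2I]
  have hQ4I : etaCT η P4 * etaCT η P4 = etaCT η P4 := by rw [← etaCT_mul h2, hP4I]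
  have hQ3I : etaCT η P3 * etaCT η P3 = etaCT η P3 := by rw [← etaCT_mul h2, hP3I]
  have hP1L1 : P1 * L1 = 0 := by rw [hL1D, mul_sub, mul_one, hP1I, sub_self]
  have hP2L1 : P2 * L1 = P2 - P1 := by rw [hL1D, mul_sub, mul_one, hP21]
  have hP3L1 : P3 * L1 = P3 - P1 := by rw [hL1D, mul_sub, mul_one, hP31]
  have hP4L1 : P4 * L1 = P4 - P1 := by rw [hL1D, mul_sub, mul_one, hP41]
  have hP2L3 : P2 * L3 = E₂₂ := hE22P.symm
  have hP4L3 : P4 * L3 = P4 - P3 := by rw [hL3D, mul_sub, mul_one, hP43]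
  have hP1L2 : P1 * L2 = 0 := by rw [hL2D, mul_sub, mul_one, hP12, sub_self]
  have hP2L2 : P2 * L2 = 0 := by rw [hL2D, mul_sub, mul_one, hP2I, sub_self]
  have hREE22 : (1 - E₂₂ * E₂₂p) * E₂₂ = 0 := hE₂₂p.R_mul
  have hQERE : etaCT η E₂₂ * etaCT η (1 - E₂₂ * E₂₂p) = 0 := by
    rw [← etaCT_mul h2, hREE22, etaCT_zero]
  constructor
  · rintro ⟨X₁, Y₁, Y₂, Y₃, hY1h, hY2h, hY3h, heq⟩
    have hR1A2 : R1 * A₂ = A₁₁ := hA₁₁.symm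
    have hR1A3 : R1 * A₃ = A₂₂ := hA₂₂.symm
    have hR1A4 : R1 * A₄ = A₃₃ := hA₃₃.symm
    have hTsum : T₁ = A₁₁ * Y₁ * etaCT η A₁₁ + A₂₂ * Y₂ * etaCT η A₂₂
        + A₃₃ * Y₃ * etaCT η A₃₃ := by
      have e0 : R1 * (A₁ * X₁) * etaCT η R1 = 0 := by
        rw [← Matrix.mul_assoc, hR1A, Matrix.zero_mul, Matrix.zero_mul]
      have e1 : R1 * etaCT η (A₁ * X₁) * etaCT η R1 = 0 := by
        have e : etaCT η (A₁ * X₁) * etaCT η R1 = etaCT η ((R1 * A₁) * X₁) := by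
          rw [etaCT_mul h2 (R1 * A₁) X₁, etaCT_mul h2 A₁ X₁, Matrix.mul_assoc,
            ← etaCT_mul h2 R1 A₁]
        rw [Matrix.mul_assoc, e, hR1A, Matrix.zero_mul, etaCT_zero, Matrix.mul_zero]
      have e2 : R1 * (A₂ * Y₁ * etaCT η A₂) * etaCT η R1 = A₁₁ * Y₁ * etaCT η A₁₁ := by
        calc R1 * (A₂ * Y₁ * etaCT η A₂) * etaCT η R1
            = ((R1 * A₂) * Y₁) * (etaCT η A₂ * etaCT η R1) := by simp only [Matrix.mul_assoc]
          _ = ((R1 * A₂) * Y₁) * etaCT η (R1 * A₂) := by rw [← etaCT_mul h2]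
          _ = A₁₁ * Y₁ * etaCT η A₁₁ := by rw [hR1A2]
      have e3 : R1 * (A₃ * Y₂ * etaCT η A₃) * etaCT η R1 = A₂₂ * Y₂ * etaCT η A₂₂ := by
        calc R1 * (A₃ * Y₂ * etaCT η A₃) * etaCT η R1
            = ((R1 * A₃) * Y₂) * (etaCT η A₃ * etaCT η R1) := by simp only [Matrix.mul_assoc]
          _ = ((R1 * A₃) * Y₂) * etaCT η (R1 * A₃) := by rw [← etaCT_mul h2]
          _ = A₂₂ * Y₂ * etaCT η A₂₂ := by rw [hR1A3]
      have e4 : R1 * (A₄ * Y₃ * etaCT η A₄) * etaCT η R1 = A₃₃ * Y₃ * etaCT η A₃₃ := by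
        calc R1 * (A₄ * Y₃ * etaCT η A₄) * etaCT η R1
            = ((R1 * A₄) * Y₃) * (etaCT η A₄ * etaCT η R1) := by simp only [Matrix.mul_assoc]
          _ = ((R1 * A₄) * Y₃) * etaCT η (R1 * A₄) := by rw [← etaCT_mul h2]
          _ = A₃₃ * Y₃ * etaCT η A₃₃ := by rw [hR1A4]
      calc T₁ = R1 * B * etaCT η R1 := hT₁
        _ = R1 * (A₁ * X₁ + etaCT η (A₁ * X₁) + A₂ * Y₁ * etaCT η A₂ + A₃ * Y₂ * etaCT η A₃
            + A₄ * Y₃ * etaCT η A₄) * etaCT η R1 := by rw [heq]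
        _ = R1 * (A₁ * X₁) * etaCT η R1 + R1 * etaCT η (A₁ * X₁) * etaCT η R1
            + R1 * (A₂ * Y₁ * etaCT η A₂) * etaCT η R1
            + R1 * (A₃ * Y₂ * etaCT η A₃) * etaCT η R1
            + R1 * (A₄ * Y₃ * etaCT η A₄) * etaCT η R1 := by
          simp only [Matrix.mul_add, Matrix.add_mul]
        _ = A₁₁ * Y₁ * etaCT η A₁₁ + A₂₂ * Y₂ * etaCT η A₂₂ + A₃₃ * Y₃ * etaCT η A₃₃ := by
          rw [e0, e1, e2, e3, e4]; abel
    -- values of E₁ … E₄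
    have hE1Y : E₁ = C₁ * Y₃ * etaCT η C₄ := by
      have e1 : C * (A₁₁ * Y₁ * etaCT η A₁₁) = 0 := by
        rw [← Matrix.mul_assoc, ← Matrix.mul_assoc, hCa, Matrix.zero_mul, Matrix.zero_mul]
      have e2 : C * (A₂₂ * Y₂ * etaCT η A₂₂) = 0 := by
        rw [← Matrix.mul_assoc, ← Matrix.mul_assoc, hCb, Matrix.zero_mul, Matrix.zero_mul]
      have e3 : C * (A₃₃ * Y₃ * etaCT η A₃₃) = C₁ * Y₃ * etaCT η C₄ := by
        rw [← Matrix.mul_assoc, ← Matrix.mul_assoc, ← hC₁, hC₄]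
      rw [hE₁, hTsum, Matrix.mul_add, Matrix.mul_add, e1, e2, e3, zero_add, zero_add]
    have hE2Y : E₂ = C₂ * Y₃ * etaCT η C₃ := by
      have e1 : Ra * (A₁₁ * Y₁ * etaCT η A₁₁) * etaCT η Rb = 0 := by
        rw [← Matrix.mul_assoc, ← Matrix.mul_assoc, hRaA]
        simp only [Matrix.zero_mul]
      have e2 : Ra * (A₂₂ * Y₂ * etaCT η A₂₂) * etaCT η Rb = 0 := by
        calc Ra * (A₂₂ * Y₂ * etaCT η A₂₂) * etaCT η Rb
            = (Ra * (A₂₂ * Y₂)) * etaCT η (Rb * A₂₂) := by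
              rw [etaCT_mul h2]; simp only [Matrix.mul_assoc]
          _ = 0 := by rw [hRbA, etaCT_zero, Matrix.mul_zero]
      have e3 : Ra * (A₃₃ * Y₃ * etaCT η A₃₃) * etaCT η Rb = C₂ * Y₃ * etaCT η C₃ := by
        calc Ra * (A₃₃ * Y₃ * etaCT η A₃₃) * etaCT η Rb
            = ((Ra * A₃₃) * Y₃) * etaCT η (Rb * A₃₃) := by
              rw [etaCT_mul h2]; simp only [Matrix.mul_assoc]
          _ = C₂ * Y₃ * etaCT η C₃ := by rw [← hC₂, ← hC₃]
      rw [hE₂, hTsum]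
      simp only [Matrix.mul_add, Matrix.add_mul]
      rw [e1, e2, e3]
      abel
    have hE3Y : E₃ = C₃ * Y₃ * etaCT η C₂ := by
      have e1 : Rb * (A₁₁ * Y₁ * etaCT η A₁₁) * etaCT η Ra = 0 := by
        calc Rb * (A₁₁ * Y₁ * etaCT η A₁₁) * etaCT η Ra
            = (Rb * (A₁₁ * Y₁)) * etaCT η (Ra * A₁₁) := by
              rw [etaCT_mul h2]; simp only [Matrix.mul_assoc]
          _ = 0 := by rw [hRaA, etaCT_zero, Matrix.mul_zero]
      have e2 : Rb * (A₂₂ * Y₂ * etaCT η A₂₂) * etaCT η Ra = 0 := by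
        rw [← Matrix.mul_assoc, ← Matrix.mul_assoc, hRbA]
        simp only [Matrix.zero_mul]
      have e3 : Rb * (A₃₃ * Y₃ * etaCT η A₃₃) * etaCT η Ra = C₃ * Y₃ * etaCT η C₂ := by
        calc Rb * (A₃₃ * Y₃ * etaCT η A₃₃) * etaCT η Ra
            = ((Rb * A₃₃) * Y₃) * etaCT η (Ra * A₃₃) := by
              rw [etaCT_mul h2]; simp only [Matrix.mul_assoc]
          _ = C₃ * Y₃ * etaCT η C₂ := by rw [← hC₂, ← hC₃]
      rw [hE₃, hTsum]
      simp only [Matrix.mul_add, Matrix.add_mul]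
      rw [e1, e2, e3]
      abel
    have hE4Y : E₄ = C₄ * Y₃ * etaCT η C₁ := by
      have e1 : (A₁₁ * Y₁ * etaCT η A₁₁) * etaCT η C = 0 := by
        calc (A₁₁ * Y₁ * etaCT η A₁₁) * etaCT η C
            = (A₁₁ * Y₁) * etaCT η (C * A₁₁) := by
              rw [etaCT_mul h2]; simp only [Matrix.mul_assoc]
          _ = 0 := by rw [hCa, etaCT_zero, Matrix.mul_zero]
      have e2 : (A₂₂ * Y₂ * etaCT η A₂₂) * etaCT η C = 0 := by
        calc (A₂₂ * Y₂ * etaCT η A₂₂) * etaCT η C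
            = (A₂₂ * Y₂) * etaCT η (C * A₂₂) := by
              rw [etaCT_mul h2]; simp only [Matrix.mul_assoc]
          _ = 0 := by rw [hCb, etaCT_zero, Matrix.mul_zero]
      have e3 : (A₃₃ * Y₃ * etaCT η A₃₃) * etaCT η C = C₄ * Y₃ * etaCT η C₁ := by
        calc (A₃₃ * Y₃ * etaCT η A₃₃) * etaCT η C
            = (A₃₃ * Y₃) * etaCT η (C * A₃₃) := by
              rw [etaCT_mul h2]; simp only [Matrix.mul_assoc]
          _ = C₄ * Y₃ * etaCT η C₁ := by rw [← hC₁, hC₄, Matrix.mul_assoc]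
      rw [hE₄, hTsum]
      simp only [Matrix.add_mul]
      rw [e1, e2, e3]
      abel
    refine ⟨?_, ?_, ?_, ?_, ?_⟩
    · rw [hE1Y]
      calc (1 - C₁ * C₁p) * (C₁ * Y₃ * etaCT η C₄)
          = (((1 - C₁ * C₁p) * C₁) * Y₃) * etaCT η C₄ := by simp only [Matrix.mul_assoc]
        _ = 0 := by rw [hC₁p.R_mul]; simp only [Matrix.zero_mul]
    · rw [hE2Y]
      calc (1 - C₂ * C₂p) * (C₂ * Y₃ * etaCT η C₃)
          = (((1 - C₂ * C₂p) * C₂) * Y₃) * etaCT η C₃ := by simp only [Matrix.mul_assoc]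
        _ = 0 := by rw [hC₂p.R_mul]; simp only [Matrix.zero_mul]
    · rw [hE3Y]
      calc (1 - C₃ * C₃p) * (C₃ * Y₃ * etaCT η C₂)
          = (((1 - C₃ * C₃p) * C₃) * Y₃) * etaCT η C₂ := by simp only [Matrix.mul_assoc]
        _ = 0 := by rw [hC₃p.R_mul]; simp only [Matrix.zero_mul]
    · rw [hE4Y]
      calc (1 - C₄ * C₄p) * (C₄ * Y₃ * etaCT η C₁)
          = (((1 - C₄ * C₄p) * C₄) * Y₃) * etaCT η C₁ := by simp only [Matrix.mul_assoc]
        _ = 0 := by rw [hC₄p.R_mul]; simp only [Matrix.zero_mul]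
    -- the fifth condition
    · have sE1 : C₁p * E₁ * etaCT η C₄p = P1 * Y₃ * etaCT η P4 := by
        rw [hE1Y]
        simp only [Matrix.mul_assoc]
        rw [← etaCT_mul h2 C₄p C₄, ← hP4D, mul_absorb hP1D.symm]
      have sE2 : C₂p * E₂ * etaCT η C₃p = P2 * Y₃ * etaCT η P3 := by
        rw [hE2Y]
        simp only [Matrix.mul_assoc]
        rw [← etaCT_mul h2 C₃p C₃, ← hP3D, mul_absorb hP2D.symm]
      have sE3 : C₃p * E₃ * etaCT η C₂p = P3 * Y₃ * etaCT η P2 := by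
        rw [hE3Y]
        simp only [Matrix.mul_assoc]
        rw [← etaCT_mul h2 C₂p C₂, ← hP2D, mul_absorb hP3D.symm]
      have sE4 : C₄p * E₄ * etaCT η C₁p = P4 * Y₃ * etaCT η P1 := by
        rw [hE4Y]
        simp only [Matrix.mul_assoc]
        rw [← etaCT_mul h2 C₁p C₁, ← hP1D, mul_absorb hP4D.symm]
      have hF1v : F₁ = P1 * Y₃ * etaCT η P4 + L1 * (P2 * Y₃ * etaCT η P3) := by
        rw [hF₁, sE1]
        congr 1
        rw [← sE2]
        simp only [Matrix.mul_assoc]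
      have hF2v : F₂ = P3 * Y₃ * etaCT η P2 + L3 * (P4 * Y₃ * etaCT η P1) := by
        rw [hF₂, sE3]
        congr 1
        rw [← sE4]
        simp only [Matrix.mul_assoc]
      set Λ₁ : Matrix (Fin a₄) (Fin a₄) Hq := Y₃ - F₁ with hΛ1
      set Λ₂ : Matrix (Fin a₄) (Fin a₄) Hq := Y₃ - F₂ with hΛ2
      have hA' : P1 * Λ₁ * etaCT η P4 = 0 := by
        have e1 : P1 * F₁ * etaCT η P4 = P1 * Y₃ * etaCT η P4 := by
          rw [hF1v]
          simp only [Matrix.mul_add, Matrix.add_mul, Matrix.mul_assoc]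
          rw [hQ4I, mul_absorb hP1I, mul_absorb hP1L1, Matrix.zero_mul, add_zero]
        rw [hΛ1, Matrix.mul_sub, Matrix.sub_mul, e1, sub_self]
      have hB' : P2 * Λ₁ * etaCT η P3 = 0 := by
        have e1 : P2 * F₁ * etaCT η P3 = P2 * Y₃ * etaCT η P3 := by
          rw [hF1v]
          simp only [Matrix.mul_add, Matrix.add_mul, Matrix.mul_assoc]
          rw [hQ43, hQ3I, mul_absorb hP21, mul_absorb hP2L1, Matrix.sub_mul,
            mul_absorb hP2I, mul_absorb hP12]
          abel
        rw [hΛ1, Matrix.mul_sub, Matrix.sub_mul, e1, sub_self]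
      have hC' : P3 * Λ₂ * etaCT η P2 = 0 := by
        have e1 : P3 * F₂ * etaCT η P2 = P3 * Y₃ * etaCT η P2 := by
          rw [hF2v]
          simp only [Matrix.mul_add, Matrix.add_mul, Matrix.mul_assoc]
          rw [hQ2I, mul_absorb hP3I, mul_absorb hP3L3, Matrix.zero_mul, add_zero]
        rw [hΛ2, Matrix.mul_sub, Matrix.sub_mul, e1, sub_self]
      have hFLL : F = Λ₁ - Λ₂ := by rw [hF, hΛ1, hΛ2]; abel
      have hl1 : P2 * Λ₁ * etaCT η P2 = ((P2 - P1) * Λ₁) * etaCT η E₂₂ := by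
        have d1 : P1 * (Λ₁ * etaCT η P2) = 0 := by
          calc P1 * (Λ₁ * etaCT η P2) = P1 * (Λ₁ * (etaCT η P4 * etaCT η P2)) := by rw [hQ42]
            _ = (P1 * (Λ₁ * etaCT η P4)) * etaCT η P2 := by simp only [Matrix.mul_assoc]
            _ = 0 := by rw [← Matrix.mul_assoc, hA', Matrix.zero_mul]
        have d3 : P1 * (Λ₁ * etaCT η P3) = 0 := by
          calc P1 * (Λ₁ * etaCT η P3) = P1 * (Λ₁ * (etaCT η P4 * etaCT η P3)) := by rw [hQ43]
            _ = (P1 * (Λ₁ * etaCT η P4)) * etaCT η P3 := by simp only [Matrix.mul_assoc]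
            _ = 0 := by rw [← Matrix.mul_assoc, hA', Matrix.zero_mul]
        have d2 : (P2 - P1) * (Λ₁ * (etaCT η P3 * etaCT η P2)) = 0 := by
          calc (P2 - P1) * (Λ₁ * (etaCT η P3 * etaCT η P2))
              = (P2 * (Λ₁ * etaCT η P3)) * etaCT η P2
                - (P1 * (Λ₁ * etaCT η P3)) * etaCT η P2 := by
                simp only [Matrix.sub_mul, Matrix.mul_assoc]
            _ = 0 := by
                rw [d3, Matrix.zero_mul, sub_zero, ← Matrix.mul_assoc, hB', Matrix.zero_mul]
        have eQE : etaCT η E₂₂ = etaCT η P2 - etaCT η P3 * etaCT η P2 := by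
          rw [hE22P, etaCT_mul h2, hL3D, etaCT_sub, etaCT_one h2, Matrix.sub_mul,
            Matrix.one_mul]
        calc P2 * Λ₁ * etaCT η P2
            = P1 * (Λ₁ * etaCT η P2) + (P2 - P1) * (Λ₁ * etaCT η P2) := by
              simp only [Matrix.sub_mul, Matrix.add_mul, Matrix.mul_assoc]
              abel
          _ = (P2 - P1) * (Λ₁ * etaCT η P2) := by rw [d1, zero_add]
          _ = (P2 - P1) * (Λ₁ * etaCT η P2)
              - (P2 - P1) * (Λ₁ * (etaCT η P3 * etaCT η P2)) := by
              rw [d2, sub_zero]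
          _ = ((P2 - P1) * Λ₁) * etaCT η E₂₂ := by
              rw [eQE]
              noncomm_ring
      have hl2 : P2 * Λ₂ * etaCT η P2 = E₂₂ * (Λ₂ * etaCT η P2) := by
        have hsplit : P2 * L3 + P2 * P3 = P2 := by
          rw [hL3D, mul_sub, mul_one]; abel
        calc P2 * Λ₂ * etaCT η P2
            = (P2 * L3 + P2 * P3) * (Λ₂ * etaCT η P2) := by
              rw [hsplit, Matrix.mul_assoc]
          _ = (P2 * L3) * (Λ₂ * etaCT η P2) + P2 * ((P3 * Λ₂) * etaCT η P2) := by
              rw [Matrix.add_mul]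
              simp only [Matrix.mul_assoc]
          _ = E₂₂ * (Λ₂ * etaCT η P2) := by
              rw [hC', Matrix.mul_zero, add_zero, hP2L3]
      have t1 : (1 - E₂₂ * E₂₂p) * (((P2 - P1) * Λ₁) * etaCT η E₂₂)
          * etaCT η (1 - E₂₂ * E₂₂p) = 0 := by
        calc (1 - E₂₂ * E₂₂p) * (((P2 - P1) * Λ₁) * etaCT η E₂₂) * etaCT η (1 - E₂₂ * E₂₂p)
            = ((1 - E₂₂ * E₂₂p) * ((P2 - P1) * Λ₁))
              * (etaCT η E₂₂ * etaCT η (1 - E₂₂ * E₂₂p)) := by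
              simp only [Matrix.mul_assoc]
          _ = 0 := by rw [hQERE, Matrix.mul_zero]
      have t2 : (1 - E₂₂ * E₂₂p) * (E₂₂ * (Λ₂ * etaCT η P2))
          * etaCT η (1 - E₂₂ * E₂₂p) = 0 := by
        calc (1 - E₂₂ * E₂₂p) * (E₂₂ * (Λ₂ * etaCT η P2)) * etaCT η (1 - E₂₂ * E₂₂p)
            = (((1 - E₂₂ * E₂₂p) * E₂₂) * (Λ₂ * etaCT η P2)) * etaCT η (1 - E₂₂ * E₂₂p) := by
              simp only [Matrix.mul_assoc]
          _ = 0 := by rw [hREE22]; simp only [Matrix.zero_mul]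
      calc (1 - E₂₂ * E₂₂p) * E * etaCT η (1 - E₂₂ * E₂₂p)
          = (1 - E₂₂ * E₂₂p) * (P2 * Λ₁ * etaCT η P2) * etaCT η (1 - E₂₂ * E₂₂p)
            - (1 - E₂₂ * E₂₂p) * (P2 * Λ₂ * etaCT η P2) * etaCT η (1 - E₂₂ * E₂₂p) := by
            rw [hEP, hFLL]
            noncomm_ring
        _ = 0 := by rw [hl1, hl2, t1, t2, sub_self]
  · rintro ⟨g1, g2, g3, g4, g5⟩
    -- rewritten conditions
    have hg1 : C₁ * (C₁p * E₁) = E₁ := by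
      have h0 := g1
      rw [Matrix.sub_mul, Matrix.one_mul, sub_eq_zero] at h0
      rw [← Matrix.mul_assoc, ← h0]
    have hg2 : C₂ * (C₂p * E₂) = E₂ := by
      have h0 := g2
      rw [Matrix.sub_mul, Matrix.one_mul, sub_eq_zero] at h0
      rw [← Matrix.mul_assoc, ← h0]
    have hg3 : C₃ * (C₃p * E₃) = E₃ := by
      have h0 := g3
      rw [Matrix.sub_mul, Matrix.one_mul, sub_eq_zero] at h0
      rw [← Matrix.mul_assoc, ← h0]
    have hg4 : C₄ * (C₄p * E₄) = E₄ := by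
      have h0 := g4
      rw [Matrix.sub_mul, Matrix.one_mul, sub_eq_zero] at h0
      rw [← Matrix.mul_assoc, ← h0]
    -- η-conjugates of the data
    have hE4e : etaCT η E₄ = E₁ := by
      rw [hE₄, hE₁, etaCT_mul h2, etaCT_etaCT h2 hs, hTh]
    have hE1e : etaCT η E₁ = E₄ := by rw [← hE4e, etaCT_etaCT h2 hs]
    have hE2e : etaCT η E₂ = E₃ := by
      rw [hE₂, hE₃]
      simp only [etaCT_mul h2, etaCT_etaCT h2 hs, hTh, Matrix.mul_assoc]
    have hE3e : etaCT η E₃ = E₂ := by rw [← hE2e, etaCT_etaCT h2 hs]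
    -- mirrored conditions
    have mirror1 : E₄ * (etaCT η C₁p * etaCT η C₁) = E₄ := by
      have h0 := congrArg (etaCT η) hg1
      simp only [etaCT_mul h2, hE1e, Matrix.mul_assoc] at h0
      exact h0
    have mirror2 : E₃ * (etaCT η C₂p * etaCT η C₂) = E₃ := by
      have h0 := congrArg (etaCT η) hg2
      simp only [etaCT_mul h2, hE2e, Matrix.mul_assoc] at h0
      exact h0
    have mirror3 : E₂ * (etaCT η C₃p * etaCT η C₃) = E₂ := by
      have h0 := congrArg (etaCT η) hg3
      simp only [etaCT_mul h2, hE3e, Matrix.mul_assoc] at h0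
      exact h0
    have mirror4 : E₁ * (etaCT η C₄p * etaCT η C₄) = E₁ := by
      have h0 := congrArg (etaCT η) hg4
      simp only [etaCT_mul h2, hE4e, Matrix.mul_assoc] at h0
      exact h0
    -- master rules
    have k1 : T₁ * etaCT η C₁p = E₄ * etaCT η C₁p := by
      rw [hE₄, Matrix.mul_assoc, ← etaCT_mul h2, hC1pC]
    have W1 : T₁ * etaCT η C₁p = C₄ * (C₄p * (T₁ * etaCT η C₁p)) := by
      calc T₁ * etaCT η C₁p = E₄ * etaCT η C₁p := k1
        _ = (C₄ * (C₄p * E₄)) * etaCT η C₁p := by rw [hg4]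
        _ = C₄ * (C₄p * (E₄ * etaCT η C₁p)) := by simp only [Matrix.mul_assoc]
        _ = C₄ * (C₄p * (T₁ * etaCT η C₁p)) := by rw [k1]
    have k2 : Rb * (T₁ * etaCT η C₂p) = E₃ * etaCT η C₂p := by
      rw [hE₃]
      simp only [Matrix.mul_assoc]
      rw [← etaCT_mul h2 C₂p Ra, hC2pRa]
    have W2 : Rb * (T₁ * etaCT η C₂p) = C₃ * (C₃p * (Rb * (T₁ * etaCT η C₂p))) := by
      calc Rb * (T₁ * etaCT η C₂p) = E₃ * etaCT η C₂p := k2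
        _ = (C₃ * (C₃p * E₃)) * etaCT η C₂p := by rw [hg3]
        _ = C₃ * (C₃p * (E₃ * etaCT η C₂p)) := by simp only [Matrix.mul_assoc]
        _ = C₃ * (C₃p * (Rb * (T₁ * etaCT η C₂p))) := by rw [k2]
    -- more projector transport
    have hC1pC3 : C₁p * C₃ = P1 := by
      rw [← hC1pC, Matrix.mul_assoc, ← hC1C3, hP1D]
    have hP1C4p : P1 * C₄p = C₁p * (C₄ * C₄p) := by
      calc P1 * C₄p = C₁p * (C₁ * C₄p) := by rw [hP1D, Matrix.mul_assoc]
        _ = C₁p * (C * (C₄ * C₄p)) := by rw [hC1']; simp only [Matrix.mul_assoc]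
        _ = C₁p * (C₄ * C₄p) := by rw [mul_absorb hC1pC]
    have hP1C3p : P1 * C₃p = C₁p * (C₃ * C₃p) := by
      calc P1 * C₃p = C₁p * (C₁ * C₃p) := by rw [hP1D, Matrix.mul_assoc]
        _ = C₁p * (C * (C₃ * C₃p)) := by rw [hC1C3]; simp only [Matrix.mul_assoc]
        _ = C₁p * (C₃ * C₃p) := by rw [mul_absorb hC1pC]
    have hP1C2p : P1 * C₂p = C₁p * (C₂ * C₂p) := by
      calc P1 * C₂p = C₁p * (C₁ * C₂p) := by rw [hP1D, Matrix.mul_assoc]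
        _ = C₁p * (Rm * (C₂ * C₂p)) := by rw [hC1Rm]; simp only [Matrix.mul_assoc]
        _ = C₁p * (C₂ * C₂p) := by rw [mul_absorb hC1pRm]
    have hP2C4p : P2 * C₄p = C₂p * (C₄ * C₄p) := by
      calc P2 * C₄p = C₂p * (C₂ * C₄p) := by rw [hP2D, Matrix.mul_assoc]
        _ = C₂p * (Ra * (C₄ * C₄p)) := by rw [hC2']; simp only [Matrix.mul_assoc]
        _ = C₂p * (C₄ * C₄p) := by rw [mul_absorb hC2pRa]
    have hP3C4p : P3 * C₄p = C₃p * (C₄ * C₄p) := by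
      calc P3 * C₄p = C₃p * (C₃ * C₄p) := by rw [hP3D, Matrix.mul_assoc]
        _ = C₃p * (Rb * (C₄ * C₄p)) := by rw [hC3']; simp only [Matrix.mul_assoc]
        _ = C₃p * (C₄ * C₄p) := by rw [mul_absorb hC3pRb]
    -- the reduced sandwich quantities
    set χ : Matrix (Fin a₄) (Fin a₄) Hq := C₄p * (T₁ * etaCT η C₁p) with hχD
    set ξ : Matrix (Fin a₄) (Fin a₄) Hq := C₃p * (T₁ * etaCT η C₂p) with hξD
    set Et1 : Matrix (Fin a₄) (Fin a₄) Hq := C₁p * E₁ * etaCT η C₄p with hEt1D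
    set Et2 : Matrix (Fin a₄) (Fin a₄) Hq := C₂p * E₂ * etaCT η C₃p with hEt2D
    set Et3 : Matrix (Fin a₄) (Fin a₄) Hq := C₃p * E₃ * etaCT η C₂p with hEt3D
    set Et4 : Matrix (Fin a₄) (Fin a₄) Hq := C₄p * E₄ * etaCT η C₁p with hEt4D
    have hF1' : F₁ = Et1 + L1 * Et2 := by
      rw [hF₁, hEt1D, hEt2D]
      congr 1
      simp only [Matrix.mul_assoc]
    have hF2' : F₂ = Et3 + L3 * Et4 := by
      rw [hF₂, hEt3D, hEt4D]
      congr 1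
      simp only [Matrix.mul_assoc]
    -- collapse lemmas
    have cE4 : Et4 = χ := by
      rw [hEt4D, hE₄, hχD]
      simp only [Matrix.mul_assoc]
      rw [← etaCT_mul h2 C₁p C, hC1pC]
    have chiQ1 : χ * etaCT η P1 = χ := by
      rw [hχD]
      simp only [Matrix.mul_assoc]
      rw [← etaCT_mul h2 (P1) C₁p, hP1C1p]
    have chiQ2 : χ * etaCT η P2 = χ := by
      rw [hχD]
      simp only [Matrix.mul_assoc]
      rw [← etaCT_mul h2 (P2) C₁p, hP2C1p]
    have xiQ2 : ξ * etaCT η P2 = ξ := by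
      rw [hξD]
      simp only [Matrix.mul_assoc]
      rw [← etaCT_mul h2 (P2) C₂p, hP2C2p]
    have hP4chi : P4 * χ = χ := by
      rw [hχD, ← Matrix.mul_assoc, hP4C4p]
    have hP3xi : P3 * ξ = ξ := by
      rw [hξD, ← Matrix.mul_assoc, hP3C3p]
    have A1 : Et1 * etaCT η P1 = P1 * χ := by
      have r1 : etaCT η C₄p * etaCT η P1 = (etaCT η C₄p * etaCT η C₄) * etaCT η C₁p := by
        rw [← etaCT_mul h2 P1 C₄p, hP1C4p, etaCT_mul h2, etaCT_mul h2]
      calc Et1 * etaCT η P1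
          = C₁p * (E₁ * (etaCT η C₄p * etaCT η P1)) := by
            rw [hEt1D]; simp only [Matrix.mul_assoc]
        _ = C₁p * ((E₁ * (etaCT η C₄p * etaCT η C₄)) * etaCT η C₁p) := by
            rw [r1]; simp only [Matrix.mul_assoc]
        _ = C₁p * (E₁ * etaCT η C₁p) := by rw [mirror4]
        _ = C₁p * (C * (T₁ * etaCT η C₁p)) := by rw [hE₁]; simp only [Matrix.mul_assoc]
        _ = C₁p * (T₁ * etaCT η C₁p) := by rw [mul_absorb hC1pC]
        _ = C₁p * (C₄ * (C₄p * (T₁ * etaCT η C₁p))) := by conv_lhs => rw [W1]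
        _ = P1 * χ := by rw [mul_absorb hC1pC4, hχD]
    have A2 : Et2 * etaCT η P1 = P2 * χ := by
      have r1 : etaCT η C₃p * etaCT η P1 = (etaCT η C₃p * etaCT η C₃) * etaCT η C₁p := by
        rw [← etaCT_mul h2 P1 C₃p, hP1C3p, etaCT_mul h2, etaCT_mul h2]
      calc Et2 * etaCT η P1
          = C₂p * (E₂ * (etaCT η C₃p * etaCT η P1)) := by
            rw [hEt2D]; simp only [Matrix.mul_assoc]
        _ = C₂p * ((E₂ * (etaCT η C₃p * etaCT η C₃)) * etaCT η C₁p) := by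
            rw [r1]; simp only [Matrix.mul_assoc]
        _ = C₂p * (E₂ * etaCT η C₁p) := by rw [mirror3]
        _ = C₂p * (Ra * (T₁ * (etaCT η Rb * etaCT η C₁p))) := by
            rw [hE₂]; simp only [Matrix.mul_assoc]
        _ = C₂p * (Ra * (T₁ * etaCT η C₁p)) := by
            rw [← etaCT_mul h2 C₁p Rb, hC1pRb]
        _ = C₂p * (Ra * (C₄ * (C₄p * (T₁ * etaCT η C₁p)))) := by conv_lhs => rw [W1]
        _ = C₂p * (C₂ * (C₄p * (T₁ * etaCT η C₁p))) := by
            rw [← Matrix.mul_assoc Ra C₄ _, ← hC2']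
        _ = P2 * χ := by rw [mul_absorb hP2D.symm, hχD]
    have A3 : Et3 * etaCT η P1 = P3 * χ := by
      have r1 : etaCT η C₂p * etaCT η P1 = (etaCT η C₂p * etaCT η C₂) * etaCT η C₁p := by
        rw [← etaCT_mul h2 P1 C₂p, hP1C2p, etaCT_mul h2, etaCT_mul h2]
      calc Et3 * etaCT η P1
          = C₃p * (E₃ * (etaCT η C₂p * etaCT η P1)) := by
            rw [hEt3D]; simp only [Matrix.mul_assoc]
        _ = C₃p * ((E₃ * (etaCT η C₂p * etaCT η C₂)) * etaCT η C₁p) := by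
            rw [r1]; simp only [Matrix.mul_assoc]
        _ = C₃p * (E₃ * etaCT η C₁p) := by rw [mirror2]
        _ = C₃p * (Rb * (T₁ * (etaCT η Ra * etaCT η C₁p))) := by
            rw [hE₃]; simp only [Matrix.mul_assoc]
        _ = C₃p * (Rb * (T₁ * etaCT η C₁p)) := by
            rw [← etaCT_mul h2 C₁p Ra, hC1pRa]
        _ = C₃p * (T₁ * etaCT η C₁p) := by rw [mul_absorb hC3pRb]
        _ = C₃p * (C₄ * (C₄p * (T₁ * etaCT η C₁p))) := by conv_lhs => rw [W1]
        _ = P3 * χ := by rw [mul_absorb hC3pC4, hχD]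
    have A4 : Et4 * etaCT η P1 = χ := by rw [cE4, chiQ1]
    have B1 : Et1 * etaCT η P2 = P1 * ξ := by
      have r1 : etaCT η C₄p * etaCT η P2 = (etaCT η C₄p * etaCT η C₄) * etaCT η C₂p := by
        rw [← etaCT_mul h2 P2 C₄p, hP2C4p, etaCT_mul h2, etaCT_mul h2]
      calc Et1 * etaCT η P2
          = C₁p * (E₁ * (etaCT η C₄p * etaCT η P2)) := by
            rw [hEt1D]; simp only [Matrix.mul_assoc]
        _ = C₁p * ((E₁ * (etaCT η C₄p * etaCT η C₄)) * etaCT η C₂p) := by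
            rw [r1]; simp only [Matrix.mul_assoc]
        _ = C₁p * (E₁ * etaCT η C₂p) := by rw [mirror4]
        _ = C₁p * (C * (T₁ * etaCT η C₂p)) := by rw [hE₁]; simp only [Matrix.mul_assoc]
        _ = C₁p * (T₁ * etaCT η C₂p) := by rw [mul_absorb hC1pC]
        _ = C₁p * (Rb * (T₁ * etaCT η C₂p)) := by
            conv_lhs => rw [← hC1pRb]
            simp only [Matrix.mul_assoc]
        _ = C₁p * (C₃ * (C₃p * (Rb * (T₁ * etaCT η C₂p)))) := by conv_lhs => rw [W2]
        _ = C₁p * (C₃ * (C₃p * (T₁ * etaCT η C₂p))) := by rw [mul_absorb hC3pRb]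
        _ = P1 * ξ := by rw [mul_absorb hC1pC3, hξD]
    have B3 : Et3 = ξ := by
      rw [hEt3D, hE₃, hξD]
      simp only [Matrix.mul_assoc]
      rw [← etaCT_mul h2 C₂p Ra, hC2pRa, mul_absorb hC3pRb]
    have xiQ1 : ξ * etaCT η P1 = P3 * χ := by rw [← B3, A3]
    have B4 : Et4 * etaCT η P2 = χ := by rw [cE4, chiQ2]
    have Et2Q3 : Et2 * etaCT η P3 = Et2 := by
      rw [hEt2D]
      simp only [Matrix.mul_assoc]
      rw [← etaCT_mul h2 P3 C₃p, hP3C3p]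
    have Et1Q4 : Et1 * etaCT η P4 = Et1 := by
      rw [hEt1D]
      simp only [Matrix.mul_assoc]
      rw [← etaCT_mul h2 P4 C₄p, hP4C4p]
    have Et2Q1 : (Et2 * etaCT η P2) * etaCT η P1 = P2 * χ := by
      rw [Matrix.mul_assoc, hQ21, A2]
    -- the value of E
    have hPF2 : P2 * F₂ * etaCT η P2 = P2 * ξ + E₂₂ * χ := by
      calc P2 * F₂ * etaCT η P2
          = P2 * (Et3 * etaCT η P2) + P2 * (L3 * (Et4 * etaCT η P2)) := by
            rw [hF2']
            simp only [Matrix.mul_add, Matrix.add_mul, Matrix.mul_assoc]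
        _ = P2 * ξ + E₂₂ * χ := by
            rw [B3, xiQ2, B4, mul_absorb hP2L3]
    have hPF1 : P2 * F₁ * etaCT η P2 = P1 * ξ + (P2 - P1) * (Et2 * etaCT η P2) := by
      calc P2 * F₁ * etaCT η P2
          = P2 * (Et1 * etaCT η P2) + (P2 * L1) * (Et2 * etaCT η P2) := by
            rw [hF1']
            simp only [Matrix.mul_add, Matrix.add_mul, Matrix.mul_assoc]
        _ = P1 * ξ + (P2 - P1) * (Et2 * etaCT η P2) := by
            rw [B1, mul_absorb hP21, hP2L1]
    have hEcomp : E = (P2 - P1) * (ξ - Et2 * etaCT η P2) + E₂₂ * χ := by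
      calc E = P2 * F₂ * etaCT η P2 - P2 * F₁ * etaCT η P2 := by
            rw [hEP, hF]
            noncomm_ring
        _ = (P2 * ξ + E₂₂ * χ) - (P1 * ξ + (P2 - P1) * (Et2 * etaCT η P2)) := by
            rw [hPF1, hPF2]
        _ = (P2 - P1) * (ξ - Et2 * etaCT η P2) + E₂₂ * χ := by noncomm_ring
    have hE22chi : E₂₂ * χ = P2 * χ - P2 * (P3 * χ) := by
      rw [hE22P, hL3D]
      simp only [Matrix.mul_sub, Matrix.sub_mul, Matrix.mul_one, Matrix.mul_assoc]
    have hEQ1 : E * etaCT η P1 = 0 := by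
      calc E * etaCT η P1
          = (P2 - P1) * ((ξ * etaCT η P1) - (Et2 * etaCT η P2) * etaCT η P1)
            + E₂₂ * (χ * etaCT η P1) := by
            rw [hEcomp]
            simp only [Matrix.mul_sub, Matrix.sub_mul, Matrix.add_mul, Matrix.mul_assoc]
        _ = (P2 - P1) * (P3 * χ - P2 * χ) + (P2 * χ - P2 * (P3 * χ)) := by
            rw [xiQ1, Et2Q1, chiQ1, hE22chi]
        _ = 0 := by
            simp only [Matrix.mul_sub, Matrix.sub_mul, mul_absorb hP13, mul_absorb hP12,
              mul_absorb hP2I]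
            abel
    have hEQ2 : E * etaCT η P2 = E := by
      rw [hEP]
      simp only [Matrix.mul_assoc]
      rw [hQ2I]
    have hP2E : P2 * E = E := by
      rw [hEP, ← Matrix.mul_assoc, ← Matrix.mul_assoc, hP2I]
    have hP1E : P1 * E = 0 := by
      have e2 : P1 * F₂ * etaCT η P2 = P1 * ξ := by
        calc P1 * F₂ * etaCT η P2
            = P1 * (Et3 * etaCT η P2) + (P1 * L3) * (Et4 * etaCT η P2) := by
              rw [hF2']
              simp only [Matrix.mul_add, Matrix.add_mul, Matrix.mul_assoc]
          _ = P1 * ξ := by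
              rw [B3, xiQ2, hP1L3, Matrix.zero_mul, add_zero]
      have e1 : P1 * F₁ * etaCT η P2 = P1 * ξ := by
        calc P1 * F₁ * etaCT η P2
            = P1 * (Et1 * etaCT η P2) + (P1 * L1) * (Et2 * etaCT η P2) := by
              rw [hF1']
              simp only [Matrix.mul_add, Matrix.add_mul, Matrix.mul_assoc]
          _ = P1 * ξ := by
              rw [B1, mul_absorb hP1I, hP1L1, Matrix.zero_mul, add_zero]
      calc P1 * E = P1 * F * etaCT η P2 := by
            rw [hEP]
            simp only [Matrix.mul_assoc]
            rw [mul_absorb hP12]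
        _ = P1 * F₂ * etaCT η P2 - P1 * F₁ * etaCT η P2 := by rw [hF]; noncomm_ring
        _ = 0 := by rw [e1, e2, sub_self]
    -- consequence of the fifth condition
    have hg5' : E - E₂₂ * (E₂₂p * E) = (E - E₂₂ * (E₂₂p * E)) * etaCT η (E₂₂ * E₂₂p) := by
      have h0 := g5
      rw [etaCT_sub, etaCT_one h2, Matrix.mul_sub, Matrix.mul_one, sub_eq_zero] at h0
      have e : (1 - E₂₂ * E₂₂p) * E = E - E₂₂ * (E₂₂p * E) := by
        rw [Matrix.sub_mul, Matrix.one_mul, Matrix.mul_assoc]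
      rw [e] at h0
      exact h0
    have hP21L3 : (P2 - P1) * L3 = E₂₂ := by
      rw [Matrix.sub_mul, hP2L3, hP1L3, sub_zero]
    have hUCQE : (P2 - P1) * (((E - E₂₂p * E) * etaCT η E₂₂p) * etaCT η E₂₂)
        = E - E₂₂ * (E₂₂p * E) := by
      have e1 : (P2 - P1) * (E - E₂₂p * E) = E - E₂₂ * (E₂₂p * E) := by
        calc (P2 - P1) * (E - E₂₂p * E)
            = (P2 - P1) * E - ((P2 - P1) * L3) * (E₂₂p * E) := by
              conv_lhs => rw [← hL3E22p]
              simp only [Matrix.mul_sub, Matrix.sub_mul, Matrix.mul_assoc]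
          _ = E - E₂₂ * (E₂₂p * E) := by
              rw [hP21L3, Matrix.sub_mul, hP2E, hP1E, sub_zero]
      calc (P2 - P1) * (((E - E₂₂p * E) * etaCT η E₂₂p) * etaCT η E₂₂)
          = ((P2 - P1) * (E - E₂₂p * E)) * etaCT η (E₂₂ * E₂₂p) := by
            rw [etaCT_mul h2]
            simp only [Matrix.mul_assoc]
        _ = (E - E₂₂ * (E₂₂p * E)) * etaCT η (E₂₂ * E₂₂p) := by rw [e1]
        _ = E - E₂₂ * (E₂₂p * E) := hg5'.symm
    -- construction of a common solution of the four sandwich equations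
    set WB : Matrix (Fin a₄) (Fin a₄) Hq :=
      (ξ - Et2 * etaCT η P2) - (P3 - P2) * χ - L3 * (E₂₂p * E) with hWBD
    set UC : Matrix (Fin a₄) (Fin a₄) Hq := (E - E₂₂p * E) * etaCT η E₂₂p with hUCD
    set Λ : Matrix (Fin a₄) (Fin a₄) Hq :=
      (P4 - P2) * χ + L2 * WB + (P2 - P1) * (UC * (etaCT η P4 - etaCT η P3)) with hΛD
    set Y0 : Matrix (Fin a₄) (Fin a₄) Hq := F₁ + Λ with hY0D
    have WBQ1 : WB * etaCT η P1 = 0 := by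
      calc WB * etaCT η P1
          = (ξ * etaCT η P1 - (Et2 * etaCT η P2) * etaCT η P1)
            - (P3 - P2) * (χ * etaCT η P1) - L3 * (E₂₂p * (E * etaCT η P1)) := by
            rw [hWBD]
            simp only [Matrix.sub_mul, Matrix.mul_assoc]
        _ = (P3 * χ - P2 * χ) - (P3 * χ - P2 * χ) - 0 := by
            rw [xiQ1, Et2Q1, chiQ1, hEQ1, Matrix.mul_zero, Matrix.mul_zero, Matrix.sub_mul]
        _ = 0 := by abel
    have WBQ2 : WB * etaCT η P2 = WB := by
      calc WB * etaCT η P2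
          = (ξ * etaCT η P2 - Et2 * (etaCT η P2 * etaCT η P2))
            - (P3 - P2) * (χ * etaCT η P2) - L3 * (E₂₂p * (E * etaCT η P2)) := by
            rw [hWBD]
            simp only [Matrix.sub_mul, Matrix.mul_assoc]
        _ = WB := by
            rw [xiQ2, hQ2I, chiQ2, hEQ2, hWBD, Matrix.mul_assoc]
    -- sandwich values of Y0
    have hP1Et1 : P1 * Et1 = Et1 := by
      rw [hEt1D, ← Matrix.mul_assoc, ← Matrix.mul_assoc, hP1C1p]
    have hP2Et2 : P2 * Et2 = Et2 := by
      rw [hEt2D, ← Matrix.mul_assoc, ← Matrix.mul_assoc, hP2C2p]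
    have z1 : P1 * (P4 - P2) = 0 := by rw [Matrix.mul_sub, hP14, hP12, sub_self]
    have z2 : P1 * (P2 - P1) = 0 := by rw [Matrix.mul_sub, hP12, hP1I, sub_self]
    have z3 : P2 * (P4 - P2) = 0 := by rw [Matrix.mul_sub, hP24, hP2I, sub_self]
    have y1 : P1 * Y0 * etaCT η P4 = Et1 := by
      have eF : P1 * F₁ * etaCT η P4 = Et1 := by
        calc P1 * F₁ * etaCT η P4
            = P1 * (Et1 * etaCT η P4) + (P1 * L1) * (Et2 * etaCT η P4) := by
              rw [hF1']
              simp only [Matrix.mul_add, Matrix.add_mul, Matrix.mul_assoc]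
          _ = Et1 := by
              rw [Et1Q4, hP1Et1, hP1L1, Matrix.zero_mul, add_zero]
      have eΛ : P1 * Λ * etaCT η P4 = 0 := by
        calc P1 * Λ * etaCT η P4
            = ((P1 * (P4 - P2)) * χ) * etaCT η P4 + ((P1 * L2) * WB) * etaCT η P4
              + ((P1 * (P2 - P1)) * (UC * (etaCT η P4 - etaCT η P3))) * etaCT η P4 := by
              rw [hΛD]
              simp only [Matrix.mul_add, Matrix.add_mul, Matrix.mul_assoc]
          _ = 0 := by
              rw [z1, z2, hP1L2]
              simp only [Matrix.zero_mul, add_zero]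
      rw [hY0D, Matrix.mul_add, Matrix.add_mul, eF, eΛ, add_zero]
    have y2 : P2 * Y0 * etaCT η P3 = Et2 := by
      have eF : P2 * F₁ * etaCT η P3 = Et2 := by
        have D1' : Et1 * etaCT η P3 = P1 * Et2 := by
          have r1 : etaCT η C₄p * etaCT η P3 = (etaCT η C₄p * etaCT η C₄) * etaCT η C₃p := by
            rw [← etaCT_mul h2 P3 C₄p, hP3C4p, etaCT_mul h2, etaCT_mul h2]
          have k6 : P1 * Et2 = C₁p * (T₁ * etaCT η C₃p) := by
            calc P1 * Et2 = (P1 * C₂p) * (E₂ * etaCT η C₃p) := by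
                  rw [hEt2D]
                  simp only [Matrix.mul_assoc]
              _ = C₁p * ((C₂ * (C₂p * E₂)) * etaCT η C₃p) := by
                  rw [hP1C2p]
                  simp only [Matrix.mul_assoc]
              _ = C₁p * (Ra * (T₁ * (etaCT η Rb * etaCT η C₃p))) := by
                  rw [hg2, hE₂]
                  simp only [Matrix.mul_assoc]
              _ = C₁p * (Ra * (T₁ * etaCT η C₃p)) := by
                  rw [← etaCT_mul h2 C₃p Rb, hC3pRb]
              _ = C₁p * (T₁ * etaCT η C₃p) := by rw [mul_absorb hC1pRa]
          calc Et1 * etaCT η P3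
              = C₁p * ((E₁ * (etaCT η C₄p * etaCT η C₄)) * etaCT η C₃p) := by
                rw [hEt1D, Matrix.mul_assoc, Matrix.mul_assoc, r1]
                simp only [Matrix.mul_assoc]
            _ = C₁p * (E₁ * etaCT η C₃p) := by rw [mirror4]
            _ = C₁p * (C * (T₁ * etaCT η C₃p)) := by rw [hE₁]; simp only [Matrix.mul_assoc]
            _ = P1 * Et2 := by rw [mul_absorb hC1pC, k6]
        calc P2 * F₁ * etaCT η P3
            = P2 * (Et1 * etaCT η P3) + (P2 * L1) * (Et2 * etaCT η P3) := by
              rw [hF1']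
              simp only [Matrix.mul_add, Matrix.add_mul, Matrix.mul_assoc]
          _ = P2 * (P1 * Et2) + (P2 - P1) * Et2 := by rw [D1', Et2Q3, hP2L1]
          _ = P1 * Et2 + (P2 * Et2 - P1 * Et2) := by
              rw [mul_absorb hP21, Matrix.sub_mul]
          _ = Et2 := by rw [hP2Et2]; abel
      have eΛ : P2 * Λ * etaCT η P3 = 0 := by
        calc P2 * Λ * etaCT η P3
            = ((P2 * (P4 - P2)) * χ) * etaCT η P3 + ((P2 * L2) * WB) * etaCT η P3
              + (P2 * (P2 - P1)) * (UC * ((etaCT η P4 - etaCT η P3) * etaCT η P3)) := by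
              rw [hΛD]
              simp only [Matrix.mul_add, Matrix.add_mul, Matrix.mul_assoc]
          _ = 0 := by
              have q0 : (etaCT η P4 - etaCT η P3) * etaCT η P3 = 0 := by
                rw [Matrix.sub_mul, hQ43, hQ3I, sub_self]
              rw [z3, hP2L2, q0]
              simp only [Matrix.zero_mul, Matrix.mul_zero, add_zero]
      rw [hY0D, Matrix.mul_add, Matrix.add_mul, eF, eΛ, add_zero]
    have y4 : P4 * Y0 * etaCT η P1 = Et4 := by
      have eF : P4 * F₁ * etaCT η P1 = P2 * χ := by
        calc P4 * F₁ * etaCT η P1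
            = P4 * (Et1 * etaCT η P1) + (P4 * L1) * (Et2 * etaCT η P1) := by
              rw [hF1']
              simp only [Matrix.mul_add, Matrix.add_mul, Matrix.mul_assoc]
          _ = P4 * (P1 * χ) + (P4 - P1) * (P2 * χ) := by rw [A1, A2, hP4L1]
          _ = P1 * χ + (P2 * χ - P1 * χ) := by
              rw [mul_absorb hP41, Matrix.sub_mul, mul_absorb hP42, mul_absorb hP12]
          _ = P2 * χ := by abel
      have eΛ : P4 * Λ * etaCT η P1 = (P4 - P2) * χ := by
        calc P4 * Λ * etaCT η P1
            = (P4 * (P4 - P2)) * (χ * etaCT η P1) + (P4 * L2) * (WB * etaCT η P1)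
              + (P4 * (P2 - P1)) * (UC * ((etaCT η P4 - etaCT η P3) * etaCT η P1)) := by
              rw [hΛD]
              simp only [Matrix.mul_add, Matrix.add_mul, Matrix.mul_assoc]
          _ = (P4 * (P4 - P2)) * χ := by
              have q0 : (etaCT η P4 - etaCT η P3) * etaCT η P1 = 0 := by
                rw [Matrix.sub_mul, hQ41, hQ31, sub_self]
              rw [chiQ1, WBQ1, q0]
              simp only [Matrix.mul_zero, add_zero]
          _ = (P4 - P2) * χ := by
              rw [Matrix.mul_sub, hP4I, hP42]
      calc P4 * Y0 * etaCT η P1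
          = P4 * F₁ * etaCT η P1 + P4 * Λ * etaCT η P1 := by
            rw [hY0D, Matrix.mul_add, Matrix.add_mul]
        _ = P2 * χ + (P4 - P2) * χ := by rw [eF, eΛ]
        _ = P4 * χ := by rw [Matrix.sub_mul]; abel
        _ = Et4 := by rw [hP4chi, cE4]
    have y3 : P3 * Y0 * etaCT η P2 = Et3 := by
      have eF : P3 * F₁ * etaCT η P2 = P1 * ξ + (P3 - P1) * (Et2 * etaCT η P2) := by
        calc P3 * F₁ * etaCT η P2
            = P3 * (Et1 * etaCT η P2) + (P3 * L1) * (Et2 * etaCT η P2) := by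
              rw [hF1']
              simp only [Matrix.mul_add, Matrix.add_mul, Matrix.mul_assoc]
          _ = P1 * ξ + (P3 - P1) * (Et2 * etaCT η P2) := by
              rw [B1, mul_absorb hP31, hP3L1]
      have eQE : etaCT η E₂₂ = etaCT η P2 - etaCT η P3 * etaCT η P2 := by
        rw [hE22P, etaCT_mul h2, hL3D, etaCT_sub, etaCT_one h2, Matrix.sub_mul,
          Matrix.one_mul]
      have eΛ : P3 * Λ * etaCT η P2
          = (P3 - P3 * P2) * χ + (P3 * L2) * WB + (P3 * E - P3 * (E₂₂ * (E₂₂p * E))) := by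
        calc P3 * Λ * etaCT η P2
            = (P3 * (P4 - P2)) * (χ * etaCT η P2) + (P3 * L2) * (WB * etaCT η P2)
              + P3 * ((P2 - P1) * (UC * ((etaCT η P4 - etaCT η P3) * etaCT η P2))) := by
              rw [hΛD]
              simp only [Matrix.mul_add, Matrix.add_mul, Matrix.mul_assoc]
          _ = (P3 - P3 * P2) * χ + (P3 * L2) * WB
              + P3 * ((P2 - P1) * (UC * etaCT η E₂₂)) := by
              have q0 : (etaCT η P4 - etaCT η P3) * etaCT η P2 = etaCT η E₂₂ := by
                rw [eQE, Matrix.sub_mul, hQ42]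
              rw [chiQ2, WBQ2, q0, Matrix.mul_sub, hP34]
          _ = (P3 - P3 * P2) * χ + (P3 * L2) * WB
              + (P3 * E - P3 * (E₂₂ * (E₂₂p * E))) := by
              rw [hUCD, hUCQE]
              noncomm_ring
      -- assemble y3
      calc P3 * Y0 * etaCT η P2
          = P3 * F₁ * etaCT η P2 + P3 * Λ * etaCT η P2 := by
            rw [hY0D, Matrix.mul_add, Matrix.add_mul]
        _ = (P1 * ξ + (P3 - P1) * (Et2 * etaCT η P2))
            + ((P3 - P3 * P2) * χ + (P3 * L2) * WB
              + (P3 * E - P3 * (E₂₂ * (E₂₂p * E)))) := by rw [eF, eΛ]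
        _ = ξ := by
            rw [hWBD, hEcomp, hE22P, hL2D, hL3D]
            simp only [Matrix.mul_add, Matrix.add_mul, Matrix.mul_sub, Matrix.sub_mul,
              Matrix.mul_one, Matrix.one_mul, Matrix.mul_assoc, mul_absorb hP1I,
              mul_absorb hP2I, mul_absorb hP3I, mul_absorb hP12, mul_absorb hP13,
              mul_absorb hP21, mul_absorb hP31, hP3xi]
            abel
        _ = Et3 := B3.symm
    -- from sandwich values to the four equations
    have hC1P1 : C₁ * P1 = C₁ := by rw [hP1D]; exact hC₁p.m1
    have hC2P2 : C₂ * P2 = C₂ := by rw [hP2D]; exact hC₂p.m1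
    have hC3P3 : C₃ * P3 = C₃ := by rw [hP3D]; exact hC₃p.m1
    have hC4P4 : C₄ * P4 = C₄ := by rw [hP4D]; exact hC₄p.m1
    have hC1Q1 : etaCT η P1 * etaCT η C₁ = etaCT η C₁ := by rw [← etaCT_mul h2, hC1P1]
    have hC2Q2 : etaCT η P2 * etaCT η C₂ = etaCT η C₂ := by rw [← etaCT_mul h2, hC2P2]
    have hC3Q3 : etaCT η P3 * etaCT η C₃ = etaCT η C₃ := by rw [← etaCT_mul h2, hC3P3]
    have hC4Q4 : etaCT η P4 * etaCT η C₄ = etaCT η C₄ := by rw [← etaCT_mul h2, hC4P4]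
    have heq1 : C₁ * Y0 * etaCT η C₄ = E₁ := by
      calc C₁ * Y0 * etaCT η C₄
          = C₁ * ((P1 * Y0 * etaCT η P4) * etaCT η C₄) := by
            conv_lhs => rw [← hC1P1, ← hC4Q4]
            simp only [Matrix.mul_assoc]
        _ = C₁ * (Et1 * etaCT η C₄) := by rw [y1]
        _ = C₁ * (C₁p * (E₁ * (etaCT η C₄p * etaCT η C₄))) := by
            rw [hEt1D]; simp only [Matrix.mul_assoc]
        _ = C₁ * (C₁p * E₁) := by rw [mirror4]
        _ = E₁ := hg1
    have heq2 : C₂ * Y0 * etaCT η C₃ = E₂ := by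
      calc C₂ * Y0 * etaCT η C₃
          = C₂ * ((P2 * Y0 * etaCT η P3) * etaCT η C₃) := by
            conv_lhs => rw [← hC2P2, ← hC3Q3]
            simp only [Matrix.mul_assoc]
        _ = C₂ * (Et2 * etaCT η C₃) := by rw [y2]
        _ = C₂ * (C₂p * (E₂ * (etaCT η C₃p * etaCT η C₃))) := by
            rw [hEt2D]; simp only [Matrix.mul_assoc]
        _ = C₂ * (C₂p * E₂) := by rw [mirror3]
        _ = E₂ := hg2
    have heq3 : C₃ * Y0 * etaCT η C₂ = E₃ := by
      calc C₃ * Y0 * etaCT η C₂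
          = C₃ * ((P3 * Y0 * etaCT η P2) * etaCT η C₂) := by
            conv_lhs => rw [← hC3P3, ← hC2Q2]
            simp only [Matrix.mul_assoc]
        _ = C₃ * (Et3 * etaCT η C₂) := by rw [y3]
        _ = C₃ * (C₃p * (E₃ * (etaCT η C₂p * etaCT η C₂))) := by
            rw [hEt3D]; simp only [Matrix.mul_assoc]
        _ = C₃ * (C₃p * E₃) := by rw [mirror2]
        _ = E₃ := hg3
    have heq4 : C₄ * Y0 * etaCT η C₁ = E₄ := by
      calc C₄ * Y0 * etaCT η C₁
          = C₄ * ((P4 * Y0 * etaCT η P1) * etaCT η C₁) := by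
            conv_lhs => rw [← hC4P4, ← hC1Q1]
            simp only [Matrix.mul_assoc]
        _ = C₄ * (Et4 * etaCT η C₁) := by rw [y4]
        _ = C₄ * (C₄p * (E₄ * (etaCT η C₁p * etaCT η C₁))) := by
            rw [hEt4D]; simp only [Matrix.mul_assoc]
        _ = C₄ * (C₄p * E₄) := by rw [mirror1]
        _ = E₄ := hg4
    -- symmetrisation
    have hY0e1 : C₁ * etaCT η Y0 * etaCT η C₄ = E₁ := by
      have h0 := congrArg (etaCT η) heq4
      simp only [etaCT_mul h2, etaCT_etaCT h2 hs, hE4e, Matrix.mul_assoc] at h0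
      rw [← Matrix.mul_assoc] at h0
      exact h0
    have hY0e2 : C₂ * etaCT η Y0 * etaCT η C₃ = E₂ := by
      have h0 := congrArg (etaCT η) heq3
      simp only [etaCT_mul h2, etaCT_etaCT h2 hs, hE3e, Matrix.mul_assoc] at h0
      rw [← Matrix.mul_assoc] at h0
      exact h0
    set c2 : ℝ := (2:ℝ)⁻¹ with hc2D
    have hc2a : c2 + c2 = 1 := by rw [hc2D]; norm_num
    have hc2b : c2 * 2 = 1 := by rw [hc2D]; norm_num
    set Y3 : Matrix (Fin a₄) (Fin a₄) Hq := c2 • (Y0 + etaCT η Y0) with hY3D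
    have hY3h : etaCT η Y3 = Y3 := by
      rw [hY3D, etaCT_rsmul, etaCT_add, etaCT_etaCT h2 hs, add_comm]
    have hsmul : ∀ (Xl : Matrix (Fin p) (Fin a₄) Hq) (Xr : Matrix (Fin a₄) (Fin p) Hq)
        (v : Matrix (Fin p) (Fin p) Hq), Xl * Y0 * Xr = v → Xl * etaCT η Y0 * Xr = v →
        Xl * Y3 * Xr = v := by
      intro Xl Xr v hv hw
      calc Xl * Y3 * Xr = c2 • (Xl * (Y0 + etaCT η Y0) * Xr) := by
            rw [hY3D, Matrix.mul_smul, Matrix.smul_mul]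
        _ = c2 • (Xl * Y0 * Xr + Xl * etaCT η Y0 * Xr) := by
            rw [Matrix.mul_add, Matrix.add_mul]
        _ = c2 • ((2:ℝ) • v) := by rw [hv, hw, two_smul]
        _ = v := by rw [smul_smul, hc2b, one_smul]
    have hq1 : C₁ * Y3 * etaCT η C₄ = E₁ := hsmul _ _ _ heq1 hY0e1
    have hq2 : C₂ * Y3 * etaCT η C₃ = E₂ := hsmul _ _ _ heq2 hY0e2
    -- the two-term equation
    set Sst : Matrix (Fin p) (Fin p) Hq := T₁ - A₃₃ * Y3 * etaCT η A₃₃ with hSstD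
    have hSsth : etaCT η Sst = Sst := by
      rw [hSstD, etaCT_sub, hTh]
      congr 1
      simp only [etaCT_mul h2, etaCT_etaCT h2 hs, hY3h, Matrix.mul_assoc]
    have hco1 : Rm * (Ra * Sst) = 0 := by
      calc Rm * (Ra * Sst) = C * Sst := by rw [← Matrix.mul_assoc, ← hC]
        _ = C * T₁ - (C * A₃₃) * (Y3 * etaCT η A₃₃) := by
            rw [hSstD, Matrix.mul_sub]
            simp only [Matrix.mul_assoc]
        _ = E₁ - C₁ * Y3 * etaCT η C₄ := by
            rw [← hE₁, ← hC₁, hC₄]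
            simp only [Matrix.mul_assoc]
        _ = 0 := by rw [hq1, sub_self]
    have hco2 : (Ra * Sst) * etaCT η Rb = 0 := by
      calc (Ra * Sst) * etaCT η Rb
          = Ra * T₁ * etaCT η Rb - (Ra * A₃₃) * (Y3 * (etaCT η A₃₃ * etaCT η Rb)) := by
            rw [hSstD]
            simp only [Matrix.mul_sub, Matrix.sub_mul, Matrix.mul_assoc]
        _ = E₂ - C₂ * Y3 * etaCT η C₃ := by
            rw [← hE₂, ← hC₂, ← etaCT_mul h2, ← hC₃]
            simp only [Matrix.mul_assoc]
        _ = 0 := by rw [hq2, sub_self]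
    have hm' : M₁ = (1 - A₁₁ * A₁₁p) * A₂₂ := by rw [← hRaD]; exact hM₁
    have hc1' : (1 - M₁ * M₁p) * ((1 - A₁₁ * A₁₁p) * Sst) = 0 := by
      rw [← hRmD, ← hRaD]; exact hco1
    have hc2' : ((1 - A₁₁ * A₁₁p) * Sst) * etaCT η (1 - A₂₂ * A₂₂p) = 0 := by
      rw [← hRaD, ← hRbD]; exact hco2
    obtain ⟨Y₁v, Y₂v, hY1vh, hY2vh, hsum⟩ :=
      twoterm h2 hs A₁₁ A₁₁p hA₁₁p A₂₂ A₂₂p hA₂₂p M₁ hm' M₁p hM₁p Sst hSsth hc1' hc2'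
    -- the X₁ part
    set D2 : Matrix (Fin p) (Fin p) Hq :=
      B - A₂ * Y₁v * etaCT η A₂ - A₃ * Y₂v * etaCT η A₃ - A₄ * Y3 * etaCT η A₄ with hD2D
    have hD2h : etaCT η D2 = D2 := by
      rw [hD2D]
      simp only [etaCT_sub, etaCT_mul h2, etaCT_etaCT h2 hs, hY1vh, hY2vh, hY3h, ← hB,
        Matrix.mul_assoc]
    have f2 : R1 * (A₂ * Y₁v * etaCT η A₂) * etaCT η R1 = A₁₁ * Y₁v * etaCT η A₁₁ := by
      calc R1 * (A₂ * Y₁v * etaCT η A₂) * etaCT η R1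
          = ((R1 * A₂) * Y₁v) * (etaCT η A₂ * etaCT η R1) := by simp only [Matrix.mul_assoc]
        _ = ((R1 * A₂) * Y₁v) * etaCT η (R1 * A₂) := by rw [← etaCT_mul h2]
        _ = A₁₁ * Y₁v * etaCT η A₁₁ := by rw [← hA₁₁]
    have f3 : R1 * (A₃ * Y₂v * etaCT η A₃) * etaCT η R1 = A₂₂ * Y₂v * etaCT η A₂₂ := by
      calc R1 * (A₃ * Y₂v * etaCT η A₃) * etaCT η R1
          = ((R1 * A₃) * Y₂v) * (etaCT η A₃ * etaCT η R1) := by simp only [Matrix.mul_assoc]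
        _ = ((R1 * A₃) * Y₂v) * etaCT η (R1 * A₃) := by rw [← etaCT_mul h2]
        _ = A₂₂ * Y₂v * etaCT η A₂₂ := by rw [← hA₂₂]
    have f4 : R1 * (A₄ * Y3 * etaCT η A₄) * etaCT η R1 = A₃₃ * Y3 * etaCT η A₃₃ := by
      calc R1 * (A₄ * Y3 * etaCT η A₄) * etaCT η R1
          = ((R1 * A₄) * Y3) * (etaCT η A₄ * etaCT η R1) := by simp only [Matrix.mul_assoc]
        _ = ((R1 * A₄) * Y3) * etaCT η (R1 * A₄) := by rw [← etaCT_mul h2]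
        _ = A₃₃ * Y3 * etaCT η A₃₃ := by rw [← hA₃₃]
    have hR1D2 : R1 * D2 * etaCT η R1 = 0 := by
      calc R1 * D2 * etaCT η R1
          = R1 * B * etaCT η R1 - R1 * (A₂ * Y₁v * etaCT η A₂) * etaCT η R1
            - R1 * (A₃ * Y₂v * etaCT η A₃) * etaCT η R1
            - R1 * (A₄ * Y3 * etaCT η A₄) * etaCT η R1 := by
            rw [hD2D]
            simp only [Matrix.mul_sub, Matrix.sub_mul]
        _ = T₁ - A₁₁ * Y₁v * etaCT η A₁₁ - A₂₂ * Y₂v * etaCT η A₂₂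
            - A₃₃ * Y3 * etaCT η A₃₃ := by rw [← hT₁, f2, f3, f4]
        _ = T₁ - (A₁₁ * Y₁v * etaCT η A₁₁ + A₂₂ * Y₂v * etaCT η A₂₂)
            - A₃₃ * Y3 * etaCT η A₃₃ := by abel
        _ = 0 := by rw [hsum, hSstD]; abel
    set X₁v : Matrix (Fin a) (Fin p) Hq :=
      A₁p * D2 - c2 • (A₁p * (D2 * etaCT η (A₁ * A₁p))) with hX1D
    have hX1a : A₁ * X₁v
        = (A₁ * A₁p) * D2 - c2 • ((A₁ * A₁p) * (D2 * etaCT η (A₁ * A₁p))) := by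
      rw [hX1D, Matrix.mul_sub, Matrix.mul_smul]
      simp only [Matrix.mul_assoc]
    have hX1e : etaCT η (A₁ * X₁v)
        = D2 * etaCT η (A₁ * A₁p) - c2 • ((A₁ * A₁p) * (D2 * etaCT η (A₁ * A₁p))) := by
      rw [hX1a, etaCT_sub, etaCT_rsmul]
      congr 1
      · rw [etaCT_mul h2, hD2h]
      · congr 1
        simp only [etaCT_mul h2, etaCT_etaCT h2 hs, hD2h, Matrix.mul_assoc]
    have hd : ∀ W : Matrix (Fin p) (Fin p) Hq, W = (A₁ * A₁p) * W + R1 * W := by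
      intro W
      rw [hR1]
      noncomm_ring
    have hsum1 : etaCT η (A₁ * A₁p) + etaCT η R1 = 1 := by
      have e : etaCT η R1 = 1 - etaCT η (A₁ * A₁p) := by rw [hR1, etaCT_sub, etaCT_one h2]
      rw [e, add_sub_cancel]
    have hr : R1 * D2 = R1 * (D2 * etaCT η (A₁ * A₁p)) := by
      calc R1 * D2 = R1 * D2 * (etaCT η (A₁ * A₁p) + etaCT η R1) := by
            rw [hsum1, Matrix.mul_one]
        _ = R1 * (D2 * etaCT η (A₁ * A₁p)) + R1 * D2 * etaCT η R1 := by
            rw [Matrix.mul_add]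
            congr 1
            rw [Matrix.mul_assoc]
        _ = R1 * (D2 * etaCT η (A₁ * A₁p)) := by rw [hR1D2, add_zero]
    have e2c : ∀ X : Matrix (Fin p) (Fin p) Hq, c2 • X + c2 • X = X := by
      intro X
      rw [← add_smul, hc2a, one_smul]
    have split2 : D2 * etaCT η (A₁ * A₁p)
        = (A₁ * A₁p) * (D2 * etaCT η (A₁ * A₁p)) + R1 * D2 := by
      conv_lhs => rw [hd (D2 * etaCT η (A₁ * A₁p))]
      rw [← hr]
    have hAX : A₁ * X₁v + etaCT η (A₁ * X₁v) = D2 := by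
      rw [hX1e, hX1a]
      calc ((A₁ * A₁p) * D2 - c2 • ((A₁ * A₁p) * (D2 * etaCT η (A₁ * A₁p))))
          + (D2 * etaCT η (A₁ * A₁p) - c2 • ((A₁ * A₁p) * (D2 * etaCT η (A₁ * A₁p))))
          = (A₁ * A₁p) * D2 + D2 * etaCT η (A₁ * A₁p)
            - (c2 • ((A₁ * A₁p) * (D2 * etaCT η (A₁ * A₁p)))
              + c2 • ((A₁ * A₁p) * (D2 * etaCT η (A₁ * A₁p)))) := by abel
        _ = (A₁ * A₁p) * D2 + D2 * etaCT η (A₁ * A₁p)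
            - (A₁ * A₁p) * (D2 * etaCT η (A₁ * A₁p)) := by rw [e2c]
        _ = (A₁ * A₁p) * D2
            + ((A₁ * A₁p) * (D2 * etaCT η (A₁ * A₁p)) + R1 * D2)
            - (A₁ * A₁p) * (D2 * etaCT η (A₁ * A₁p)) := by rw [← split2]
        _ = (A₁ * A₁p) * D2 + R1 * D2 := by abel
        _ = D2 := (hd D2).symm
    refine ⟨X₁v, Y₁v, Y₂v, Y3, hY1vh.symm, hY2vh.symm, hY3h.symm, ?_⟩
    rw [hAX, hD2D]
    abel


set_option maxHeartbeats 1000000 in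
/-- Theorem 4.1 (1) ⇔ (2): solvability conditions for the η-Hermitian equation
`A₁X₁ + (A₁X₁)^{η*} + A₂Y₁A₂^{η*} + A₃Y₂A₃^{η*} + A₄Y₃A₄^{η*} = B`. -/
theorem stmt14 {p a a₂ a₃ a₄ : ℕ} (η : Hq) (hη : η = qi ∨ η = qj ∨ η = qk)
    (A₁ : Matrix (Fin p) (Fin a) Hq) (A₂ : Matrix (Fin p) (Fin a₂) Hq)
    (A₃ : Matrix (Fin p) (Fin a₃) Hq) (A₄ : Matrix (Fin p) (Fin a₄) Hq)
    (B : Matrix (Fin p) (Fin p) Hq) (hB : B = etaCT η B)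
    (A₁p : Matrix (Fin a) (Fin p) Hq) (hA₁p : IsMPInv A₁ A₁p)
    (A₁₁ : Matrix (Fin p) (Fin a₂) Hq) (hA₁₁ : A₁₁ = (1 - A₁ * A₁p) * A₂)
    (A₂₂ : Matrix (Fin p) (Fin a₃) Hq) (hA₂₂ : A₂₂ = (1 - A₁ * A₁p) * A₃)
    (A₃₃ : Matrix (Fin p) (Fin a₄) Hq) (hA₃₃ : A₃₃ = (1 - A₁ * A₁p) * A₄)
    (A₁₁p : Matrix (Fin a₂) (Fin p) Hq) (hA₁₁p : IsMPInv A₁₁ A₁₁p)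
    (A₂₂p : Matrix (Fin a₃) (Fin p) Hq) (hA₂₂p : IsMPInv A₂₂ A₂₂p)
    (M₁ : Matrix (Fin p) (Fin a₃) Hq) (hM₁ : M₁ = (1 - A₁₁ * A₁₁p) * A₂₂)
    (M₁p : Matrix (Fin a₃) (Fin p) Hq) (hM₁p : IsMPInv M₁ M₁p)
    (T₁ : Matrix (Fin p) (Fin p) Hq)
    (hT₁ : T₁ = (1 - A₁ * A₁p) * B * etaCT η (1 - A₁ * A₁p))
    (C : Matrix (Fin p) (Fin p) Hq) (hC : C = (1 - M₁ * M₁p) * (1 - A₁₁ * A₁₁p))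
    (C₁ : Matrix (Fin p) (Fin a₄) Hq) (hC₁ : C₁ = C * A₃₃)
    (C₂ : Matrix (Fin p) (Fin a₄) Hq) (hC₂ : C₂ = (1 - A₁₁ * A₁₁p) * A₃₃)
    (C₃ : Matrix (Fin p) (Fin a₄) Hq) (hC₃ : C₃ = (1 - A₂₂ * A₂₂p) * A₃₃)
    (C₄ : Matrix (Fin p) (Fin a₄) Hq) (hC₄ : C₄ = A₃₃)
    (E₁ : Matrix (Fin p) (Fin p) Hq) (hE₁ : E₁ = C * T₁)
    (E₂ : Matrix (Fin p) (Fin p) Hq)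
    (hE₂ : E₂ = (1 - A₁₁ * A₁₁p) * T₁ * etaCT η (1 - A₂₂ * A₂₂p))
    (E₃ : Matrix (Fin p) (Fin p) Hq)
    (hE₃ : E₃ = (1 - A₂₂ * A₂₂p) * T₁ * etaCT η (1 - A₁₁ * A₁₁p))
    (E₄ : Matrix (Fin p) (Fin p) Hq) (hE₄ : E₄ = T₁ * etaCT η C)
    (C₁p : Matrix (Fin a₄) (Fin p) Hq) (hC₁p : IsMPInv C₁ C₁p)
    (C₂p : Matrix (Fin a₄) (Fin p) Hq) (hC₂p : IsMPInv C₂ C₂p)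
    (C₃p : Matrix (Fin a₄) (Fin p) Hq) (hC₃p : IsMPInv C₃ C₃p)
    (C₄p : Matrix (Fin a₄) (Fin p) Hq) (hC₄p : IsMPInv C₄ C₄p)
    (C₁₁ : Matrix (Fin a₄) (Fin a₄ ⊕ Fin a₄) Hq)
    (hC₁₁ : C₁₁ = Matrix.fromCols (1 - C₂p * C₂) (1 - C₄p * C₄))
    (C₁₁p : Matrix (Fin a₄ ⊕ Fin a₄) (Fin a₄) Hq) (hC₁₁p : IsMPInv C₁₁ C₁₁p)
    (C₂₂ : Matrix (Fin a₄) (Fin a₄) Hq) (hC₂₂ : C₂₂ = 1 - C₁p * C₁)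
    (C₃₃ : Matrix (Fin a₄) (Fin a₄) Hq) (hC₃₃ : C₃₃ = 1 - C₃p * C₃)
    (E₁₁ : Matrix (Fin a₄) (Fin a₄) Hq) (hE₁₁ : E₁₁ = (1 - C₁₁ * C₁₁p) * C₂₂)
    (E₂₂ : Matrix (Fin a₄) (Fin a₄) Hq) (hE₂₂ : E₂₂ = (1 - C₁₁ * C₁₁p) * C₃₃)
    (E₂₂p : Matrix (Fin a₄) (Fin a₄) Hq) (hE₂₂p : IsMPInv E₂₂ E₂₂p)
    (F₁ : Matrix (Fin a₄) (Fin a₄) Hq)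
    (hF₁ : F₁ = C₁p * E₁ * etaCT η C₄p + (1 - C₁p * C₁) * C₂p * E₂ * etaCT η C₃p)
    (F₂ : Matrix (Fin a₄) (Fin a₄) Hq)
    (hF₂ : F₂ = C₃p * E₃ * etaCT η C₂p + (1 - C₃p * C₃) * C₄p * E₄ * etaCT η C₁p)
    (F : Matrix (Fin a₄) (Fin a₄) Hq) (hF : F = F₂ - F₁)
    (E : Matrix (Fin a₄) (Fin a₄) Hq)
    (hE : E = (1 - C₁₁ * C₁₁p) * F * etaCT η (1 - C₁₁ * C₁₁p)) :
    (∃ (X₁ : Matrix (Fin a) (Fin p) Hq) (Y₁ : Matrix (Fin a₂) (Fin a₂) Hq)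
        (Y₂ : Matrix (Fin a₃) (Fin a₃) Hq) (Y₃ : Matrix (Fin a₄) (Fin a₄) Hq),
        Y₁ = etaCT η Y₁ ∧ Y₂ = etaCT η Y₂ ∧ Y₃ = etaCT η Y₃ ∧
        A₁ * X₁ + etaCT η (A₁ * X₁) + A₂ * Y₁ * etaCT η A₂
          + A₃ * Y₂ * etaCT η A₃ + A₄ * Y₃ * etaCT η A₄ = B) ↔
      ((1 - C₁ * C₁p) * E₁ = 0 ∧ (1 - C₂ * C₂p) * E₂ = 0 ∧
       (1 - C₃ * C₃p) * E₃ = 0 ∧ (1 - C₄ * C₄p) * E₄ = 0 ∧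
       (1 - E₂₂ * E₂₂p) * E * etaCT η (1 - E₂₂ * E₂₂p) = 0) :=
  stmt14_aux η hη A₁ A₂ A₃ A₄ B hB A₁p hA₁p A₁₁ hA₁₁ A₂₂ hA₂₂ A₃₃ hA₃₃ A₁₁p hA₁₁p A₂₂p hA₂₂p M₁ hM₁ M₁p hM₁p T₁ hT₁ C hC C₁ hC₁ C₂ hC₂ C₃ hC₃ C₄ hC₄ E₁ hE₁ E₂ hE₂ E₃ hE₃ E₄ hE₄ C₁p hC₁p C₂p hC₂p C₃p hC₃p C₄p hC₄p C₁₁ hC₁₁ C₁₁p hC₁₁p C₂₂ hC₂₂ C₃₃ hC₃₃ E₁₁ hE₁₁ E₂₂ hE₂₂ E₂₂p hE₂₂p F₁ hF₁ F₂ hF₂ F hF E hE
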